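/- arXiv:2007.06301 — 7 statements merged into one kernel-verified Lean document; each statement's English description precedes it below -/
import Mathlib

section
/- Let H : [0,∞) → [0,1] be measurable and integrable with ‖H‖₁ = ∫_0^∞ H(x) dx. There exists a finite constant C > 0, depending only on H, such that for every L > 0, (1/L) ∫_0^L ( exp( ∫_0^L H(ρ_L(0,z)) H(ρ_L(x,z)) dz ) − 1 ) dx ≤ (4C/L) ‖H‖₁². -/
open MeasureTheory Real

/-- Toroidal (circular) distance on `[0, L]`. -/
noncomputable def torDist (L x y : ℝ) : ℝ := min |x - y| (L - |x - y|)

section Aux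

variable {H : ℝ → ℝ}

/-- A measurable function with bounded norm is interval integrable. -/
lemma aux_intInt {f : ℝ → ℝ} (hf : Measurable f) {c : ℝ} (hb : ∀ x, ‖f x‖ ≤ c) (a b : ℝ) :
    IntervalIntegrable f volume a b := by
  rw [intervalIntegrable_iff]
  haveI : IsFiniteMeasure (volume.restrict (Set.uIoc a b)) :=
    ⟨by rw [Measure.restrict_apply_univ]; exact measure_Ioc_lt_top⟩
  exact (integrable_const c).mono' hf.aestronglyMeasurable (Filter.Eventually.of_forall hb)

/-- A measurable function with bounded norm is integrable w.r.t. a finite measure. -/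
lemma aux_int_fin {μ : Measure ℝ} [IsFiniteMeasure μ] {f : ℝ → ℝ} (hf : Measurable f)
    {c : ℝ} (hb : ∀ x, ‖f x‖ ≤ c) : Integrable f μ :=
  (integrable_const c).mono' hf.aestronglyMeasurable (Filter.Eventually.of_forall hb)

lemma aux_int_fin' {α : Type*} [MeasurableSpace α] {μ : Measure α} [IsFiniteMeasure μ]
    {f : α → ℝ} (hf : Measurable f) {c : ℝ} (hb : ∀ x, ‖f x‖ ≤ c) : Integrable f μ :=
  (integrable_const c).mono' hf.aestronglyMeasurable (Filter.Eventually.of_forall hb)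

lemma aux_norm_le_one (h0 : ∀ x, 0 ≤ H x) (h1 : ∀ x, H x ≤ 1) (x : ℝ) : ‖H x‖ ≤ 1 := by
  rw [Real.norm_eq_abs, abs_of_nonneg (h0 x)]; exact h1 x

/-- Partial integrals of `H` are bounded by the full integral. -/
lemma aux_partial (h0 : ∀ x, 0 ≤ H x) (hint : IntegrableOn H (Set.Ioi 0))
    {b : ℝ} (hb : 0 ≤ b) :
    ∫ x in (0:ℝ)..b, H x ≤ ∫ x in Set.Ioi (0:ℝ), H x := by
  rw [intervalIntegral.integral_of_le hb]
  exact setIntegral_mono_set hint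
    (Filter.Eventually.of_forall fun x => h0 x)
    (HasSubset.Subset.eventuallyLE Set.Ioc_subset_Ioi_self)

/-- `∫_0^w H(min z (L-z)) dz ≤ 2A` for `0 ≤ w ≤ L`. -/
lemma aux_g_bound (hmeas : Measurable H) (h0 : ∀ x, 0 ≤ H x) (h1 : ∀ x, H x ≤ 1)
    (hint : IntegrableOn H (Set.Ioi 0)) {L w : ℝ} (hL : 0 < L) (hw0 : 0 ≤ w) (hwL : w ≤ L) :
    ∫ z in (0:ℝ)..w, H (min z (L - z)) ≤ 2 * ∫ x in Set.Ioi (0:ℝ), H x := by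
  set A := ∫ x in Set.Ioi (0:ℝ), H x
  have hgmeas : Measurable fun z => H (min z (L - z)) :=
    hmeas.comp ((continuous_id.min (continuous_const.sub continuous_id)).measurable)
  have hgnorm : ∀ z, ‖H (min z (L - z))‖ ≤ 1 := fun z => aux_norm_le_one h0 h1 _
  have hgint : ∀ a b : ℝ, IntervalIntegrable (fun z => H (min z (L - z))) volume a b :=
    aux_intInt hgmeas hgnorm
  have step1 : ∫ z in (0:ℝ)..w, H (min z (L - z)) ≤ ∫ z in (0:ℝ)..L, H (min z (L - z)) := by
    rw [← intervalIntegral.integral_add_adjacent_intervals (hgint 0 w) (hgint w L)]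
    have : 0 ≤ ∫ z in w..L, H (min z (L - z)) :=
      intervalIntegral.integral_nonneg hwL (fun z _ => h0 _)
    linarith
  have half1 : ∫ z in (0:ℝ)..(L/2), H (min z (L - z)) = ∫ z in (0:ℝ)..(L/2), H z := by
    apply intervalIntegral.integral_congr
    intro z hz
    rw [Set.uIcc_of_le (by linarith : (0:ℝ) ≤ L/2)] at hz
    have h1' : z ≤ L - z := by
      simp only [Set.mem_Icc] at hz; linarith [hz.1, hz.2]
    simp [min_eq_left h1']
  have half2 : ∫ z in (L/2)..L, H (min z (L - z)) = ∫ z in (0:ℝ)..(L/2), H z := by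
    have congr2 : ∫ z in (L/2)..L, H (min z (L - z)) = ∫ z in (L/2)..L, H (L - z) := by
      apply intervalIntegral.integral_congr
      intro z hz
      rw [Set.uIcc_of_le (by linarith : L/2 ≤ L)] at hz
      have h2' : L - z ≤ z := by simp only [Set.mem_Icc] at hz; linarith [hz.1, hz.2]
      simp [min_eq_right h2']
    rw [congr2, intervalIntegral.integral_comp_sub_left H L,
      show L - L = 0 by ring, show L - L / 2 = L / 2 by ring]
  have split : ∫ z in (0:ℝ)..L, H (min z (L - z))
      = (∫ z in (0:ℝ)..(L/2), H (min z (L - z))) + ∫ z in (L/2)..L, H (min z (L - z)) := by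
    rw [intervalIntegral.integral_add_adjacent_intervals (hgint 0 (L/2)) (hgint (L/2) L)]
  have hpart : ∫ z in (0:ℝ)..(L/2), H z ≤ A := aux_partial h0 hint (by linarith)
  calc ∫ z in (0:ℝ)..w, H (min z (L - z))
      ≤ ∫ z in (0:ℝ)..L, H (min z (L - z)) := step1
    _ = (∫ z in (0:ℝ)..(L/2), H z) + ∫ z in (0:ℝ)..(L/2), H z := by rw [split, half1, half2]
    _ ≤ 2 * A := by linarith

/-- `∫_0^L H(torDist L x z) dx ≤ 4A` for `z ∈ [0, L]`. -/
lemma aux_tor_bound (hmeas : Measurable H) (h0 : ∀ x, 0 ≤ H x) (h1 : ∀ x, H x ≤ 1)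
    (hint : IntegrableOn H (Set.Ioi 0)) {L z : ℝ} (hL : 0 < L) (hz0 : 0 ≤ z) (hzL : z ≤ L) :
    ∫ x in (0:ℝ)..L, H (torDist L x z) ≤ 4 * ∫ x in Set.Ioi (0:ℝ), H x := by
  set A := ∫ x in Set.Ioi (0:ℝ), H x
  have htormeas : Measurable fun x => H (torDist L x z) := by
    apply hmeas.comp
    have : Continuous fun x : ℝ => torDist L x z := by
      unfold torDist
      exact (continuous_abs.comp (continuous_id.sub continuous_const)).min
        (continuous_const.sub (continuous_abs.comp (continuous_id.sub continuous_const)))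
    exact this.measurable
  have hint' : ∀ a b : ℝ, IntervalIntegrable (fun x => H (torDist L x z)) volume a b :=
    aux_intInt htormeas (fun x => aux_norm_le_one h0 h1 _)
  have part1 : ∫ x in (0:ℝ)..z, H (torDist L x z)
      = ∫ u in (0:ℝ)..z, H (min u (L - u)) := by
    have heq : ∫ x in (0:ℝ)..z, H (torDist L x z)
        = ∫ x in (0:ℝ)..z, (fun u => H (min u (L - u))) (z - x) := by
      apply intervalIntegral.integral_congr
      intro x hx
      rw [Set.uIcc_of_le hz0] at hx
      have habs : |x - z| = z - x := by
        rw [abs_of_nonpos (by simp only [Set.mem_Icc] at hx; linarith [hx.1, hx.2])]; ring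
      simp only [torDist, habs]
    rw [heq, intervalIntegral.integral_comp_sub_left (fun u => H (min u (L - u))) z,
      show z - z = 0 by ring, show z - 0 = z by ring]
  have part2 : ∫ x in z..L, H (torDist L x z)
      = ∫ u in (0:ℝ)..(L - z), H (min u (L - u)) := by
    have heq : ∫ x in z..L, H (torDist L x z)
        = ∫ x in z..L, (fun u => H (min u (L - u))) (x - z) := by
      apply intervalIntegral.integral_congr
      intro x hx
      rw [Set.uIcc_of_le hzL] at hx
      have habs : |x - z| = x - z := by
        rw [abs_of_nonneg (by simp only [Set.mem_Icc] at hx; linarith [hx.1, hx.2])]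
      simp only [torDist, habs]
    rw [heq, intervalIntegral.integral_comp_sub_right (fun u => H (min u (L - u))) z,
      show z - z = 0 by ring]
  have b1 : ∫ u in (0:ℝ)..z, H (min u (L - u)) ≤ 2 * A :=
    aux_g_bound hmeas h0 h1 hint hL hz0 hzL
  have b2 : ∫ u in (0:ℝ)..(L - z), H (min u (L - u)) ≤ 2 * A :=
    aux_g_bound hmeas h0 h1 hint hL (by linarith) (by linarith)
  have hsplit : (∫ x in (0:ℝ)..z, H (torDist L x z)) + ∫ x in z..L, H (torDist L x z)
      = ∫ x in (0:ℝ)..L, H (torDist L x z) :=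
    intervalIntegral.integral_add_adjacent_intervals (hint' 0 z) (hint' z L)
  rw [← hsplit, part1, part2]
  linarith

end Aux

/-- There is a finite constant `C > 0`, depending only on `H`, such that for every `L > 0`,
`(1/L) ∫_0^L ( exp( ∫_0^L H(ρ_L(0,z)) H(ρ_L(x,z)) dz ) − 1 ) dx ≤ (4C/L) ‖H‖₁²`. -/
theorem stmt_2 (H : ℝ → ℝ)
    (hmeas : Measurable H) (h0 : ∀ x, 0 ≤ H x) (h1 : ∀ x, H x ≤ 1)
    (hint : IntegrableOn H (Set.Ioi 0)) :
    ∃ C > (0:ℝ), ∀ L > (0:ℝ),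
      (1 / L) * ∫ x in (0:ℝ)..L,
          (Real.exp (∫ z in (0:ℝ)..L, H (torDist L 0 z) * H (torDist L x z)) - 1)
        ≤ (4 * C / L) * (∫ x in Set.Ioi (0:ℝ), H x) ^ 2 := by
  have hA0 : 0 ≤ ∫ x in Set.Ioi (0:ℝ), H x :=
    setIntegral_nonneg measurableSet_Ioi fun x _ => h0 x
  set A := ∫ x in Set.Ioi (0:ℝ), H x with hA
  refine ⟨2 * Real.exp (2 * A), by positivity, ?_⟩
  intro L hL
  set μ := volume.restrict (Set.Ioc (0:ℝ) L) with hμ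
  haveI : IsFiniteMeasure μ :=
    ⟨by rw [hμ, Measure.restrict_apply_univ]; exact measure_Ioc_lt_top⟩
  -- measurability
  have htorcont : Continuous fun p : ℝ × ℝ => torDist L p.1 p.2 := by
    unfold torDist
    exact (continuous_abs.comp (continuous_fst.sub continuous_snd)).min
      (continuous_const.sub (continuous_abs.comp (continuous_fst.sub continuous_snd)))
  have hf2meas : Measurable fun p : ℝ × ℝ => H (torDist L 0 p.2) * H (torDist L p.1 p.2) := by
    refine Measurable.mul ?_ ?_
    · exact hmeas.comp (htorcont.measurable.comp (measurable_const.prodMk measurable_snd))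
    · exact hmeas.comp (htorcont.measurable.comp (measurable_fst.prodMk measurable_snd))
  have hmeas0 : Measurable fun z => H (torDist L 0 z) :=
    hmeas.comp ((htorcont.comp (Continuous.prodMk_right 0)).measurable)
  have hmeasx : ∀ x, Measurable fun z => H (torDist L x z) := fun x =>
    hmeas.comp ((htorcont.comp (Continuous.prodMk_right x)).measurable)
  have hmeasz : ∀ z, Measurable fun x => H (torDist L x z) := fun z =>
    hmeas.comp ((htorcont.comp (Continuous.prodMk continuous_id continuous_const
      : Continuous fun x : ℝ => (x, z))).measurable)
  set I : ℝ → ℝ := fun x => ∫ z in (0:ℝ)..L, H (torDist L 0 z) * H (torDist L x z) with hI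
  have hbound1 : ∀ x z : ℝ, ‖H (torDist L 0 z) * H (torDist L x z)‖ ≤ 1 := by
    intro x z
    rw [Real.norm_eq_abs, abs_of_nonneg (mul_nonneg (h0 _) (h0 _))]
    exact mul_le_one₀ (h1 _) (h0 _) (h1 _)
  have hintzx : ∀ x, ∀ a b : ℝ,
      IntervalIntegrable (fun z => H (torDist L 0 z) * H (torDist L x z)) volume a b :=
    fun x => aux_intInt ((hmeas0).mul (hmeasx x)) (hbound1 x)
  have hint0 : ∀ a b : ℝ, IntervalIntegrable (fun z => H (torDist L 0 z)) volume a b :=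
    aux_intInt hmeas0 (fun z => aux_norm_le_one h0 h1 _)
  -- ∫_0^L H(torDist L 0 z) dz ≤ 2A
  have hzero_bound : ∫ z in (0:ℝ)..L, H (torDist L 0 z) ≤ 2 * A := by
    have congr0 : ∫ z in (0:ℝ)..L, H (torDist L 0 z)
        = ∫ z in (0:ℝ)..L, H (min z (L - z)) := by
      apply intervalIntegral.integral_congr
      intro z hz
      rw [Set.uIcc_of_le hL.le] at hz
      have habs : |(0:ℝ) - z| = z := by rw [zero_sub, abs_neg, abs_of_nonneg hz.1]
      simp only [torDist, habs]
    rw [congr0]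
    exact aux_g_bound hmeas h0 h1 hint hL hL.le le_rfl
  have hI0 : ∀ x, 0 ≤ I x := fun x =>
    intervalIntegral.integral_nonneg hL.le (fun z _ => mul_nonneg (h0 _) (h0 _))
  have hIle : ∀ x, I x ≤ 2 * A := by
    intro x
    have hle : I x ≤ ∫ z in (0:ℝ)..L, H (torDist L 0 z) := by
      apply intervalIntegral.integral_mono_on hL.le (hintzx x 0 L) (hint0 0 L)
      intro z _
      exact mul_le_of_le_one_right (h0 _) (h1 _)
    linarith [hzero_bound]
  -- exp bound
  have hexp : ∀ x, Real.exp (I x) - 1 ≤ Real.exp (2 * A) * I x := by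
    intro x
    have ht0 := hI0 x
    have ht1 := hIle x
    have key : Real.exp (I x) - 1 ≤ I x * Real.exp (I x) := by
      have e1 : Real.exp (I x) * Real.exp (-(I x)) = 1 := by
        rw [← Real.exp_add]; simp
      have h2 := mul_le_mul_of_nonneg_left (Real.add_one_le_exp (-(I x)))
        (Real.exp_pos (I x)).le
      rw [e1] at h2
      nlinarith [h2]
    have h2 : I x * Real.exp (I x) ≤ I x * Real.exp (2 * A) :=
      mul_le_mul_of_nonneg_left (Real.exp_le_exp.mpr ht1) ht0
    linarith
  -- measurability of I
  have hIeq : I = fun x => ∫ z, H (torDist L 0 z) * H (torDist L x z) ∂μ := by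
    funext x
    show (∫ z in (0:ℝ)..L, H (torDist L 0 z) * H (torDist L x z)) = _
    rw [intervalIntegral.integral_of_le hL.le]
  have hImeas : Measurable I := by
    rw [hIeq]
    have hunc : Measurable
        (Function.uncurry fun x z : ℝ => H (torDist L 0 z) * H (torDist L x z)) := hf2meas
    exact (hunc.stronglyMeasurable.integral_prod_right (ν := μ)).measurable
  have hIint : IntervalIntegrable I volume 0 L := by
    apply aux_intInt hImeas (c := 2 * A)
    intro x
    rw [Real.norm_eq_abs, abs_of_nonneg (hI0 x)]
    exact hIle x
  have hExpInt : IntervalIntegrable (fun x => Real.exp (I x) - 1) volume 0 L := by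
    apply aux_intInt (hImeas.exp.sub measurable_const)
      (c := Real.exp (2 * A))
    intro x
    show ‖Real.exp (I x) - 1‖ ≤ Real.exp (2 * A)
    rw [Real.norm_eq_abs, abs_of_nonneg (by linarith [Real.one_le_exp (hI0 x)] : 
      (0:ℝ) ≤ Real.exp (I x) - 1)]
    have := Real.exp_le_exp.mpr (hIle x)
    linarith [Real.exp_pos (2 * A)]
  -- Fubini: ∫_0^L I ≤ 8 A²
  have hFubini : ∫ x in (0:ℝ)..L, I x ≤ 8 * A ^ 2 := by
    have hFint : Integrable
        (Function.uncurry fun x z => H (torDist L 0 z) * H (torDist L x z)) (μ.prod μ) := by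
      apply aux_int_fin' (μ := μ.prod μ) hf2meas (c := 1)
      intro p
      exact hbound1 p.1 p.2
    have hswap : ∫ x, ∫ z, H (torDist L 0 z) * H (torDist L x z) ∂μ ∂μ
        = ∫ z, ∫ x, H (torDist L 0 z) * H (torDist L x z) ∂μ ∂μ :=
      integral_integral_swap hFint
    have hinner : ∀ z ∈ Set.Ioc (0:ℝ) L,
        ∫ x, H (torDist L 0 z) * H (torDist L x z) ∂μ ≤ H (torDist L 0 z) * (4 * A) := by
      intro z hz
      rw [integral_const_mul]
      apply mul_le_mul_of_nonneg_left _ (h0 _)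
      have : ∫ x, H (torDist L x z) ∂μ = ∫ x in (0:ℝ)..L, H (torDist L x z) := by
        rw [intervalIntegral.integral_of_le hL.le]
      rw [this]
      exact aux_tor_bound hmeas h0 h1 hint hL hz.1.le hz.2
    have houter : ∫ z, ∫ x, H (torDist L 0 z) * H (torDist L x z) ∂μ ∂μ
        ≤ ∫ z, H (torDist L 0 z) * (4 * A) ∂μ := by
      refine setIntegral_mono_on ?_ ?_ measurableSet_Ioc hinner
      · exact hFint.integral_prod_right
      · apply aux_int_fin (hmeas0.mul_const _) (c := 4 * A)
        intro z
        rw [Real.norm_eq_abs, abs_of_nonneg (mul_nonneg (h0 _) (by linarith))]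
        calc H (torDist L 0 z) * (4 * A) ≤ 1 * (4 * A) :=
              mul_le_mul_of_nonneg_right (h1 _) (by linarith)
          _ = 4 * A := one_mul _
    have hlast : ∫ z, H (torDist L 0 z) * (4 * A) ∂μ ≤ 8 * A ^ 2 := by
      rw [integral_mul_const]
      have : ∫ z, H (torDist L 0 z) ∂μ = ∫ z in (0:ℝ)..L, H (torDist L 0 z) := by
        rw [intervalIntegral.integral_of_le hL.le]
      rw [this]
      nlinarith [hzero_bound, hA0]
    calc ∫ x in (0:ℝ)..L, I x = ∫ x, I x ∂μ := by rw [intervalIntegral.integral_of_le hL.le]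
      _ = ∫ x, ∫ z, H (torDist L 0 z) * H (torDist L x z) ∂μ ∂μ := by rw [hIeq]
      _ = ∫ z, ∫ x, H (torDist L 0 z) * H (torDist L x z) ∂μ ∂μ := hswap
      _ ≤ ∫ z, H (torDist L 0 z) * (4 * A) ∂μ := houter
      _ ≤ 8 * A ^ 2 := hlast
  -- combine
  have hmain : ∫ x in (0:ℝ)..L, (Real.exp (I x) - 1) ≤ Real.exp (2 * A) * (8 * A ^ 2) := by
    calc ∫ x in (0:ℝ)..L, (Real.exp (I x) - 1)
        ≤ ∫ x in (0:ℝ)..L, Real.exp (2 * A) * I x := by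
          apply intervalIntegral.integral_mono_on hL.le hExpInt (hIint.const_mul _)
          intro x _
          exact hexp x
      _ = Real.exp (2 * A) * ∫ x in (0:ℝ)..L, I x := by
          rw [intervalIntegral.integral_const_mul]
      _ ≤ Real.exp (2 * A) * (8 * A ^ 2) :=
          mul_le_mul_of_nonneg_left hFubini (Real.exp_pos _).le
  have hgoal : (1 / L) * ∫ x in (0:ℝ)..L, (Real.exp (I x) - 1)
      ≤ (4 * (2 * Real.exp (2 * A)) / L) * A ^ 2 := by
    have h1L : (0:ℝ) ≤ 1 / L := by positivity
    calc (1 / L) * ∫ x in (0:ℝ)..L, (Real.exp (I x) - 1)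
        ≤ (1 / L) * (Real.exp (2 * A) * (8 * A ^ 2)) :=
          mul_le_mul_of_nonneg_left hmain h1L
      _ = (4 * (2 * Real.exp (2 * A)) / L) * A ^ 2 := by
          field_simp; ring
  exact hgoal
end

section
/- Let L > 0, R > 0, α > 0, and let H : [0,∞) → [0,1] be measurable and integrable with ‖H‖₁ = ∫_0^∞ H(x) dx. Define g(x) = ∫_0^L H(ρ_L(0,z)/R) H(ρ_L(x,z)/R) dz for x ∈ [0,L]. Then, with C_α = (e^α − 1)/α, the integral of e^{g(x)} − 1 over the set { x ∈ [0,L] : g(x) ≤ α } is at most 4 C_α R² ‖H‖₁². -/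
open MeasureTheory Real

-- bounded measurable integrable on finite measure sets
lemma bddIntegrableOn {f : ℝ → ℝ} (hf : Measurable f) (h0 : ∀ x, 0 ≤ f x)
    (h1 : ∀ x, f x ≤ 1) {s : Set ℝ} (hfin : volume s < ⊤) :
    IntegrableOn f s :=
  Integrable.mono' (integrableOn_const (C := (1:ℝ)) hfin.ne) hf.aestronglyMeasurable.restrict
    (Filter.Eventually.of_forall fun x => by
      rw [Real.norm_eq_abs, abs_of_nonneg (h0 x)]; exact h1 x)

lemma bddII {f : ℝ → ℝ} (hf : Measurable f) (h0 : ∀ x, 0 ≤ f x)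
    (h1 : ∀ x, f x ≤ 1) (a b : ℝ) : IntervalIntegrable f volume a b :=
  intervalIntegrable_iff.mpr (bddIntegrableOn hf h0 h1 measure_Ioc_lt_top)

lemma key_bound (L R : ℝ) (hL : 0 < L) (hR : 0 < R) (H : ℝ → ℝ)
    (hmeas : Measurable H) (h0 : ∀ x, 0 ≤ H x) (h1 : ∀ x, H x ≤ 1)
    (hint : IntegrableOn H (Set.Ioi 0)) {y : ℝ} (hy : y ∈ Set.Icc 0 L) :
    ∫ z in (0:ℝ)..L, H (torDist L y z / R) ≤ 2 * (R * ∫ x in Set.Ioi (0:ℝ), H x) := by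
  obtain ⟨hy0, hyL⟩ := hy
  set F : ℝ → ℝ := fun u => H (u / R) with hF
  set G : ℝ → ℝ := fun u => F (min u (L - u)) with hGdef
  have hFmeas : Measurable F := hmeas.comp (measurable_id.div_const R)
  have hGmeas : Measurable G :=
    hFmeas.comp ((continuous_id.min (continuous_const.sub continuous_id)).measurable)
  have hF0 : ∀ x, 0 ≤ F x := fun x => h0 _
  have hF1 : ∀ x, F x ≤ 1 := fun x => h1 _
  have hFI : ∀ a b : ℝ, IntervalIntegrable F volume a b := bddII hFmeas hF0 hF1
  have hGI : ∀ a b : ℝ, IntervalIntegrable G volume a b :=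
    bddII hGmeas (fun x => h0 _) (fun x => h1 _)
  -- F integrable on Ioi 0, with value R * ∫ H
  have hFcomp : F = fun u => H (R⁻¹ * u) := by
    funext u; simp [hF, div_eq_inv_mul]
  have hFIoi : IntegrableOn F (Set.Ioi 0) := by
    rw [hFcomp]
    have := (integrableOn_Ioi_comp_mul_left_iff H 0 (inv_pos.mpr hR)).mpr
    simpa using this (by simpa using hint)
  have hFval : (∫ u in Set.Ioi (0:ℝ), F u) = R * ∫ x in Set.Ioi (0:ℝ), H x := by
    rw [hFcomp, integral_comp_mul_left_Ioi H 0 (inv_pos.mpr hR)]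
    simp [smul_eq_mul]
  -- ∫_0^{L/2} F ≤ ∫_{Ioi 0} F
  have half_le : (∫ u in (0:ℝ)..(L/2), F u) ≤ R * ∫ x in Set.Ioi (0:ℝ), H x := by
    rw [intervalIntegral.integral_of_le (by linarith), ← hFval]
    apply setIntegral_mono_set hFIoi
    · exact Filter.Eventually.of_forall fun x => hF0 x
    · exact HasSubset.Subset.eventuallyLE Set.Ioc_subset_Ioi_self
  -- main claim for a ∈ [0, L/2]
  have claim : ∀ a : ℝ, 0 ≤ a → a ≤ L / 2 →
      (∫ u in (0:ℝ)..a, G u) + ∫ u in (0:ℝ)..(L-a), G u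
        ≤ 2 * (R * ∫ x in Set.Ioi (0:ℝ), H x) := by
    intro a ha0 ha
    have e1 : (∫ u in (0:ℝ)..a, G u) = ∫ u in (0:ℝ)..a, F u := by
      apply intervalIntegral.integral_congr
      intro u hu
      rw [Set.uIcc_of_le ha0] at hu
      obtain ⟨h1u, h2u⟩ := hu
      have : min u (L - u) = u := min_eq_left (by linarith)
      simp [hGdef, this]
    have e2 : (∫ u in (0:ℝ)..(L-a), G u)
        = (∫ u in (0:ℝ)..(L/2), G u) + ∫ u in (L/2)..(L-a), G u :=
      (intervalIntegral.integral_add_adjacent_intervals (hGI _ _) (hGI _ _)).symm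
    have e3 : (∫ u in (0:ℝ)..(L/2), G u) = ∫ u in (0:ℝ)..(L/2), F u := by
      apply intervalIntegral.integral_congr
      intro u hu
      rw [Set.uIcc_of_le (by linarith)] at hu
      obtain ⟨h1u, h2u⟩ := hu
      have : min u (L - u) = u := min_eq_left (by linarith)
      simp [hGdef, this]
    have e4 : (∫ u in (L/2)..(L-a), G u) = ∫ u in (L/2)..(L-a), F (L - u) := by
      apply intervalIntegral.integral_congr
      intro u hu
      rw [Set.uIcc_of_le (by linarith)] at hu
      obtain ⟨h1u, h2u⟩ := hu
      have : min u (L - u) = L - u := min_eq_right (by linarith)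
      simp [hGdef, this]
    have e5 : (∫ u in (L/2)..(L-a), F (L - u)) = ∫ u in a..(L/2), F u := by
      rw [intervalIntegral.integral_comp_sub_left F L]
      congr 1 <;> ring
    have e6 : (∫ u in (0:ℝ)..a, F u) + ∫ u in a..(L/2), F u = ∫ u in (0:ℝ)..(L/2), F u :=
      intervalIntegral.integral_add_adjacent_intervals (hFI _ _) (hFI _ _)
    calc (∫ u in (0:ℝ)..a, G u) + ∫ u in (0:ℝ)..(L-a), G u
        = 2 * ∫ u in (0:ℝ)..(L/2), F u := by
          rw [e1, e2, e3, e4, e5, ← e6]; ring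
      _ ≤ 2 * (R * ∫ x in Set.Ioi (0:ℝ), H x) := by linarith
  -- split the integral at y and change variables
  have split : (∫ z in (0:ℝ)..L, H (torDist L y z / R))
      = (∫ u in (0:ℝ)..y, G u) + ∫ u in (0:ℝ)..(L-y), G u := by
    have hzI : IntervalIntegrable (fun z => H (torDist L y z / R)) volume 0 y := by
      apply bddII _ (fun x => h0 _) (fun x => h1 _)
      exact hmeas.comp ((((continuous_const.sub continuous_id).abs.min
        (continuous_const.sub (continuous_const.sub continuous_id).abs)).div_const R).measurable)
    have hzI2 : IntervalIntegrable (fun z => H (torDist L y z / R)) volume y L := by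
      apply bddII _ (fun x => h0 _) (fun x => h1 _)
      exact hmeas.comp ((((continuous_const.sub continuous_id).abs.min
        (continuous_const.sub (continuous_const.sub continuous_id).abs)).div_const R).measurable)
    rw [← intervalIntegral.integral_add_adjacent_intervals hzI hzI2]
    congr 1
    · have c1 : (∫ z in (0:ℝ)..y, H (torDist L y z / R)) = ∫ z in (0:ℝ)..y, G (y - z) := by
        apply intervalIntegral.integral_congr
        intro z hz
        rw [Set.uIcc_of_le hy0] at hz
        obtain ⟨hz1, hz2⟩ := hz
        have : |y - z| = y - z := abs_of_nonneg (by linarith)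
        simp [torDist, hGdef, hF, this]
      rw [c1, intervalIntegral.integral_comp_sub_left G y]
      norm_num
    · have c1 : (∫ z in y..L, H (torDist L y z / R)) = ∫ z in y..L, G (z - y) := by
        apply intervalIntegral.integral_congr
        intro z hz
        rw [Set.uIcc_of_le hyL] at hz
        obtain ⟨hz1, hz2⟩ := hz
        have : |y - z| = z - y := by rw [abs_sub_comm]; exact abs_of_nonneg (by linarith)
        simp [torDist, hGdef, hF, this]
      rw [c1, intervalIntegral.integral_comp_sub_right G y]
      norm_num
  rw [split]
  rcases le_or_gt y (L/2) with hc | hc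
  · exact claim y hy0 hc
  · have := claim (L - y) (by linarith) (by linarith)
    rw [show L - (L - y) = y by ring] at this
    linarith

lemma exp_sub_one_le {α t : ℝ} (hα : 0 < α) (ht0 : 0 ≤ t) (htα : t ≤ α) :
    Real.exp t - 1 ≤ (Real.exp α - 1) / α * t := by
  have ha1 : (0:ℝ) ≤ 1 - t / α := by
    rw [sub_nonneg]; exact div_le_one_of_le₀ htα hα.le
  have ha2 : (0:ℝ) ≤ t / α := div_nonneg ht0 hα.le
  have ha3 : (1 - t / α) + t / α = 1 := by ring
  have key := convexOn_exp.2 (Set.mem_univ (0:ℝ)) (Set.mem_univ α) ha1 ha2 ha3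
  have hc : (1 - t / α) • (0:ℝ) + (t / α) • α = t := by
    simp only [smul_eq_mul, mul_zero, zero_add]
    field_simp
  rw [hc] at key
  have h2 : Real.exp t ≤ (1 - t / α) * 1 + t / α * Real.exp α := by
    simpa [smul_eq_mul, Real.exp_zero] using key
  have h3 : Real.exp t - 1 ≤ t / α * (Real.exp α - 1) := by nlinarith
  calc Real.exp t - 1 ≤ t / α * (Real.exp α - 1) := h3
    _ = (Real.exp α - 1) / α * t := by ring

/-- With `C_α = (e^α − 1)/α`, the integral of `e^{g(x)} − 1` over
`{ x ∈ [0,L] : g(x) ≤ α }` is at most `4 C_α R² ‖H‖₁²`,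
where `g(x) = ∫_0^L H(ρ_L(0,z)/R) H(ρ_L(x,z)/R) dz`. -/
theorem stmt_4 (L R α : ℝ) (hL : 0 < L) (hR : 0 < R) (hα : 0 < α) (H : ℝ → ℝ)
    (hmeas : Measurable H) (h0 : ∀ x, 0 ≤ H x) (h1 : ∀ x, H x ≤ 1)
    (hint : IntegrableOn H (Set.Ioi 0))
    (g : ℝ → ℝ)
    (hg : ∀ x, g x = ∫ z in (0:ℝ)..L, H (torDist L 0 z / R) * H (torDist L x z / R)) :
    ∫ x in {x : ℝ | x ∈ Set.Icc (0:ℝ) L ∧ g x ≤ α}, (Real.exp (g x) - 1)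
      ≤ 4 * ((Real.exp α - 1) / α) * R ^ 2 * (∫ x in Set.Ioi (0:ℝ), H x) ^ 2 := by
  set Cα := (Real.exp α - 1) / α with hCα
  set M := 2 * (R * ∫ x in Set.Ioi (0:ℝ), H x) with hM
  have hCα0 : 0 ≤ Cα := div_nonneg (by linarith [Real.one_le_exp hα.le]) hα.le
  set f : ℝ → ℝ → ℝ := fun x z => H (torDist L 0 z / R) * H (torDist L x z / R) with hf
  -- measurability of uncurried f
  have htor : Continuous fun p : ℝ × ℝ => torDist L p.1 p.2 := by
    unfold torDist
    exact ((continuous_fst.sub continuous_snd).abs.min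
      (continuous_const.sub (continuous_fst.sub continuous_snd).abs))
  have hfm : Measurable fun p : ℝ × ℝ => f p.1 p.2 := by
    apply Measurable.mul
    · exact hmeas.comp (((htor.comp (continuous_const.prodMk continuous_snd)).div_const R).measurable)
    · exact hmeas.comp ((htor.div_const R).measurable)
  have hf0 : ∀ x z, 0 ≤ f x z := fun x z => mul_nonneg (h0 _) (h0 _)
  have hf1 : ∀ x z, f x z ≤ 1 := fun x z =>
    mul_le_one₀ (h1 _) (h0 _) (h1 _)
  -- g as set integral
  have hg' : ∀ x, g x = ∫ z in Set.Ioc (0:ℝ) L, f x z := by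
    intro x; rw [hg x, intervalIntegral.integral_of_le hL.le]
  haveI : IsFiniteMeasure (volume.restrict (Set.Ioc (0:ℝ) L)) :=
    ⟨by rw [Measure.restrict_apply_univ]; exact measure_Ioc_lt_top⟩
  have hgm : Measurable g := by
    have : StronglyMeasurable fun x => ∫ z in Set.Ioc (0:ℝ) L, f x z :=
      (hfm.stronglyMeasurable).integral_prod_right'
    have := this.measurable
    convert this using 1; funext x; exact hg' x
  have hg0 : ∀ x, 0 ≤ g x := fun x => by
    rw [hg x]; exact intervalIntegral.integral_nonneg hL.le fun z _ => hf0 x z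
  have hgL : ∀ x, g x ≤ L := by
    intro x
    rw [hg x]
    calc (∫ z in (0:ℝ)..L, f x z) ≤ ∫ z in (0:ℝ)..L, (1:ℝ) := by
          apply intervalIntegral.integral_mono_on hL.le _ intervalIntegrable_const
            (fun z _ => hf1 x z)
          exact bddII (hfm.comp (measurable_const.prodMk measurable_id))
            (hf0 x) (hf1 x) 0 L
      _ = L := by simp
  -- the set S
  set S := {x : ℝ | x ∈ Set.Icc (0:ℝ) L ∧ g x ≤ α} with hS
  have hSm : MeasurableSet S := by
    have : S = Set.Icc 0 L ∩ g ⁻¹' Set.Iic α := by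
      ext x; simp only [hS, Set.mem_setOf_eq, Set.mem_inter_iff, Set.mem_preimage,
        Set.mem_Iic]
    rw [this]
    exact measurableSet_Icc.inter (hgm measurableSet_Iic)
  have hSsub : S ⊆ Set.Icc 0 L := fun x hx => hx.1
  have hSfin : volume S < ⊤ := lt_of_le_of_lt (measure_mono hSsub) measure_Icc_lt_top
  -- integrability of g on Icc 0 L
  have hgInt : IntegrableOn g (Set.Icc 0 L) := by
    apply Integrable.mono' (integrableOn_const (C := L) measure_Icc_lt_top.ne)
      hgm.aestronglyMeasurable.restrict
    exact Filter.Eventually.of_forall fun x => by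
      rw [Real.norm_eq_abs, abs_of_nonneg (hg0 x)]; exact hgL x
  have hgIntS : IntegrableOn g S := hgInt.mono_set hSsub
  -- step 1: pointwise bound on S and integral comparison
  have hexpInt : IntegrableOn (fun x => Real.exp (g x) - 1) S := by
    apply Integrable.mono' (g := fun _ => Real.exp α - 1)
      (integrableOn_const (C := Real.exp α - 1) hSfin.ne)
      ((Real.measurable_exp.comp hgm).sub measurable_const).aestronglyMeasurable.restrict
    rw [ae_restrict_iff' hSm]
    apply Filter.Eventually.of_forall
    intro x hx
    have h1x : (1:ℝ) ≤ Real.exp (g x) := Real.one_le_exp (hg0 x)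
    have h2x : Real.exp (g x) ≤ Real.exp α := Real.exp_le_exp.mpr hx.2
    show ‖Real.exp (g x) - 1‖ ≤ Real.exp α - 1
    rw [Real.norm_eq_abs, abs_of_nonneg (by linarith)]
    linarith
  have step1 : (∫ x in S, (Real.exp (g x) - 1)) ≤ ∫ x in S, Cα * g x := by
    apply setIntegral_mono_on hexpInt (hgIntS.const_mul Cα) hSm
    intro x hx
    exact exp_sub_one_le hα (hg0 x) hx.2
  -- step 2: extend to Ioc 0 L
  have step2 : (∫ x in S, Cα * g x) ≤ Cα * ∫ x in Set.Ioc (0:ℝ) L, g x := by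
    rw [integral_const_mul]
    apply mul_le_mul_of_nonneg_left _ hCα0
    have h1' : (∫ x in S, g x) ≤ ∫ x in Set.Icc (0:ℝ) L, g x := by
      apply setIntegral_mono_set hgInt
        (Filter.Eventually.of_forall fun x => hg0 x)
        (HasSubset.Subset.eventuallyLE hSsub)
    rw [integral_Icc_eq_integral_Ioc] at h1'
    exact h1'
  -- step 3: Fubini and the key lemma
  have hμfin : IsFiniteMeasure ((volume.restrict (Set.Ioc (0:ℝ) L)).prod
      (volume.restrict (Set.Ioc (0:ℝ) L))) := by infer_instance
  have hfprod : Integrable (fun p : ℝ × ℝ => f p.1 p.2)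
      ((volume.restrict (Set.Ioc (0:ℝ) L)).prod (volume.restrict (Set.Ioc (0:ℝ) L))) := by
    apply Integrable.mono' (integrable_const 1) hfm.aestronglyMeasurable
    exact Filter.Eventually.of_forall fun p => by
      rw [Real.norm_eq_abs, abs_of_nonneg (hf0 _ _)]; exact hf1 _ _
  have swap : (∫ x in Set.Ioc (0:ℝ) L, g x)
      = ∫ z in Set.Ioc (0:ℝ) L, ∫ x in Set.Ioc (0:ℝ) L, f x z := by
    have : (∫ x in Set.Ioc (0:ℝ) L, g x)
        = ∫ x in Set.Ioc (0:ℝ) L, ∫ z in Set.Ioc (0:ℝ) L, f x z := by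
      apply setIntegral_congr_fun measurableSet_Ioc
      intro x _; exact hg' x
    rw [this]
    exact integral_integral_swap hfprod
  -- inner bound
  have key0 : (∫ z in Set.Ioc (0:ℝ) L, H (torDist L 0 z / R)) ≤ M := by
    rw [← intervalIntegral.integral_of_le hL.le]
    exact key_bound L R hL hR H hmeas h0 h1 hint ⟨le_refl 0, hL.le⟩
  have hM0 : 0 ≤ M :=
    le_trans (setIntegral_nonneg measurableSet_Ioc fun z _ => h0 _) key0
  have keyz : ∀ z ∈ Set.Ioc (0:ℝ) L, (∫ x in Set.Ioc (0:ℝ) L, H (torDist L x z / R)) ≤ M := by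
    intro z hz
    have hsym : ∀ x, torDist L x z = torDist L z x := by
      intro x; unfold torDist; rw [abs_sub_comm]
    simp_rw [hsym]
    rw [← intervalIntegral.integral_of_le hL.le]
    exact key_bound L R hL hR H hmeas h0 h1 hint ⟨hz.1.le, hz.2⟩
  -- pull constant out of inner integral
  have inner_eq : ∀ z, (∫ x in Set.Ioc (0:ℝ) L, f x z)
      = H (torDist L 0 z / R) * ∫ x in Set.Ioc (0:ℝ) L, H (torDist L x z / R) := by
    intro z
    simp only [hf]
    rw [integral_const_mul]
  have hinner_meas : Measurable fun z => ∫ x in Set.Ioc (0:ℝ) L, H (torDist L x z / R) := by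
    have : StronglyMeasurable fun z => ∫ x in Set.Ioc (0:ℝ) L, H (torDist L x z / R) := by
      apply StronglyMeasurable.integral_prod_right'
        (f := fun p : ℝ × ℝ => H (torDist L p.2 p.1 / R))
      exact (hmeas.comp (((htor.comp (continuous_snd.prodMk continuous_fst)).div_const
        R).measurable)).stronglyMeasurable
    exact this.measurable
  have hinner_nonneg : ∀ z, 0 ≤ ∫ x in Set.Ioc (0:ℝ) L, H (torDist L x z / R) := fun z =>
    setIntegral_nonneg measurableSet_Ioc fun x _ => h0 _
  have hinner_le : ∀ z, (∫ x in Set.Ioc (0:ℝ) L, H (torDist L x z / R)) ≤ L := by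
    intro z
    calc (∫ x in Set.Ioc (0:ℝ) L, H (torDist L x z / R))
        ≤ ∫ _x in Set.Ioc (0:ℝ) L, (1:ℝ) := by
          apply setIntegral_mono_on _ (integrableOn_const (C := (1:ℝ)) measure_Ioc_lt_top.ne)
            measurableSet_Ioc (fun x _ => h1 _)
          apply bddIntegrableOn _ (fun x => h0 _) (fun x => h1 _) measure_Ioc_lt_top
          exact hmeas.comp (((htor.comp (continuous_id.prodMk continuous_const)).div_const
            R).measurable)
      _ = L := by simp [Real.volume_Ioc, hL.le]
  have hH0m : Measurable fun z => H (torDist L 0 z / R) :=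
    hmeas.comp (((htor.comp (continuous_const.prodMk continuous_id)).div_const R).measurable)
  have step3 : (∫ z in Set.Ioc (0:ℝ) L, ∫ x in Set.Ioc (0:ℝ) L, f x z) ≤ M * M := by
    have b1 : (∫ z in Set.Ioc (0:ℝ) L, ∫ x in Set.Ioc (0:ℝ) L, f x z)
        ≤ ∫ z in Set.Ioc (0:ℝ) L, H (torDist L 0 z / R) * M := by
      apply setIntegral_mono_on _ _ measurableSet_Ioc
      · intro z hz
        rw [inner_eq z]
        exact mul_le_mul_of_nonneg_left (keyz z hz) (h0 _)
      · -- integrability of z ↦ ∫ f x z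
        have hm : Measurable fun z => ∫ x in Set.Ioc (0:ℝ) L, f x z := by
          have : (fun z => ∫ x in Set.Ioc (0:ℝ) L, f x z)
              = fun z => H (torDist L 0 z / R) * ∫ x in Set.Ioc (0:ℝ) L, H (torDist L x z / R) := by
            funext z; exact inner_eq z
          rw [this]
          exact hH0m.mul hinner_meas
        apply Integrable.mono' (g := fun _ => L)
          (integrableOn_const (C := L) (measure_Ioc_lt_top : volume (Set.Ioc (0:ℝ) L) < ⊤).ne)
          hm.aestronglyMeasurable.restrict
        apply Filter.Eventually.of_forall
        intro z
        have hnn : 0 ≤ ∫ x in Set.Ioc (0:ℝ) L, f x z := by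
          rw [inner_eq z]; exact mul_nonneg (h0 _) (hinner_nonneg z)
        rw [Real.norm_eq_abs, abs_of_nonneg hnn, inner_eq z]
        calc H (torDist L 0 z / R) * ∫ x in Set.Ioc (0:ℝ) L, H (torDist L x z / R)
            ≤ 1 * L := mul_le_mul (h1 _) (hinner_le z) (hinner_nonneg z) zero_le_one
          _ = L := one_mul L
      · exact (bddIntegrableOn hH0m (fun x => h0 _) (fun x => h1 _)
          measure_Ioc_lt_top).mul_const M
    have b2 : (∫ z in Set.Ioc (0:ℝ) L, H (torDist L 0 z / R) * M) ≤ M * M := by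
      rw [integral_mul_const]
      exact mul_le_mul_of_nonneg_right key0 hM0
    linarith
  -- combine
  have final : (∫ x in S, (Real.exp (g x) - 1)) ≤ Cα * (M * M) := by
    calc (∫ x in S, (Real.exp (g x) - 1)) ≤ ∫ x in S, Cα * g x := step1
      _ ≤ Cα * ∫ x in Set.Ioc (0:ℝ) L, g x := step2
      _ ≤ Cα * (M * M) := by
          rw [swap]
          exact mul_le_mul_of_nonneg_left step3 hCα0
  calc (∫ x in S, (Real.exp (g x) - 1)) ≤ Cα * (M * M) := final
    _ = 4 * Cα * R ^ 2 * (∫ x in Set.Ioi (0:ℝ), H x) ^ 2 := by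
        rw [hM]; ring
end

section
/- Let H : [0,∞) → [0,1] be measurable and integrable with ‖H‖₁ = ∫_0^∞ H(x) dx > 0, let γ > 0, and for L > 1 set R_L = γ ln L. Define E(L) = L · exp( −2 R_L ∫_0^{L/(2R_L)} H(u) du ) (the mean number of isolated nodes in the soft RGG with scaled connection function H(·/R_L)). Then, as L → ∞: E(L) → 0 if 2γ‖H‖₁ > 1, and E(L) → ∞ if 2γ‖H‖₁ < 1. -/
open MeasureTheory Real Filter

/-- Sharp threshold for the mean number of isolated nodes:
with `R_L = γ ln L` and `E(L) = L exp(−2 R_L ∫_0^{L/(2R_L)} H(u) du)`,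
`E(L) → 0` if `2γ‖H‖₁ > 1` and `E(L) → ∞` if `2γ‖H‖₁ < 1`. -/
theorem stmt_7 (H : ℝ → ℝ)
    (hmeas : Measurable H) (h0 : ∀ x, 0 ≤ H x) (h1 : ∀ x, H x ≤ 1)
    (hint : IntegrableOn H (Set.Ioi 0)) (hpos : 0 < ∫ x in Set.Ioi (0:ℝ), H x)
    (γ : ℝ) (hγ : 0 < γ)
    (E : ℝ → ℝ)
    (hE : ∀ L : ℝ, 1 < L →
      E L = L * Real.exp (-(2 * (γ * Real.log L) *
        ∫ u in (0:ℝ)..(L / (2 * (γ * Real.log L))), H u))) :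
    (2 * γ * (∫ x in Set.Ioi (0:ℝ), H x) > 1 → Tendsto E atTop (nhds 0))
    ∧ (2 * γ * (∫ x in Set.Ioi (0:ℝ), H x) < 1 → Tendsto E atTop atTop) := by
  set c := ∫ x in Set.Ioi (0:ℝ), H x with hc
  -- x / log x → ∞
  have hdiv : Tendsto (fun x : ℝ => x / Real.log x) atTop atTop := by
    have h0' : Tendsto (fun x : ℝ => Real.log x / x) atTop (nhdsWithin 0 (Set.Ioi 0)) := by
      rw [tendsto_nhdsWithin_iff]
      refine ⟨Real.isLittleO_log_id_atTop.tendsto_div_nhds_zero, ?_⟩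
      filter_upwards [eventually_gt_atTop (1:ℝ)] with x hx
      exact div_pos (Real.log_pos hx) (lt_trans one_pos hx)
    have := h0'.inv_tendsto_nhdsGT_zero
    simpa [Pi.inv_def, inv_div] using this
  have hM : Tendsto (fun L : ℝ => L / (2 * (γ * Real.log L))) atTop atTop := by
    have := hdiv.atTop_div_const (by positivity : (0:ℝ) < 2 * γ)
    refine this.congr' ?_
    filter_upwards [eventually_gt_atTop (1:ℝ)] with x hx
    rw [div_div]
    ring_nf
  have hI : Tendsto (fun M : ℝ => ∫ u in (0:ℝ)..M, H u) atTop (nhds c) :=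
    intervalIntegral_tendsto_integral_Ioi 0 hint tendsto_id
  have hIM : Tendsto (fun L : ℝ => ∫ u in (0:ℝ)..(L / (2 * (γ * Real.log L))), H u)
      atTop (nhds c) := hI.comp hM
  have hcoef : Tendsto (fun L : ℝ =>
      1 - 2 * γ * ∫ u in (0:ℝ)..(L / (2 * (γ * Real.log L))), H u)
      atTop (nhds (1 - 2 * γ * c)) := by
    exact (tendsto_const_nhds.sub ((tendsto_const_nhds.mul hIM)))
  have hEeq : ∀ᶠ L in atTop, E L = Real.exp (Real.log L *
      (1 - 2 * γ * ∫ u in (0:ℝ)..(L / (2 * (γ * Real.log L))), H u)) := by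
    filter_upwards [eventually_gt_atTop (1:ℝ)] with L hL
    have hL0 : (0:ℝ) < L := lt_trans one_pos hL
    rw [hE L hL]
    nth_rewrite 1 [← Real.exp_log hL0]
    rw [← Real.exp_add]
    congr 1
    ring
  have hlog : Tendsto Real.log atTop atTop := Real.tendsto_log_atTop
  constructor
  · intro hgt
    have hneg : 1 - 2 * γ * c < 0 := by linarith
    have hprod : Tendsto (fun L : ℝ => Real.log L *
        (1 - 2 * γ * ∫ u in (0:ℝ)..(L / (2 * (γ * Real.log L))), H u)) atTop atBot :=
      hlog.atTop_mul_neg hneg hcoef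
    have := Real.tendsto_exp_atBot.comp hprod
    exact this.congr' (hEeq.mono fun x h => h.symm)
  · intro hlt
    have hposc : 0 < 1 - 2 * γ * c := by linarith
    have hprod : Tendsto (fun L : ℝ => Real.log L *
        (1 - 2 * γ * ∫ u in (0:ℝ)..(L / (2 * (γ * Real.log L))), H u)) atTop atTop :=
      hlog.atTop_mul_pos hposc hcoef
    have := Real.tendsto_exp_atTop.comp hprod
    exact this.congr' (hEeq.mono fun x h => h.symm)
end

section
/- Let H : [0,∞) → [0,1] be monotone decreasing with unbounded support, i.e. ∫_r^∞ H(x) dx > 0 for every r ≥ 0, and let α > 0. Then ∫_0^∞ ( 1 − (1 − H(z + α))^{1+n} ) dz → ∞ as n → ∞. In particular, if R_L = γ ln L and n_L = ⌊δ R_L⌋ for fixed γ, δ > 0, then R_L ∫_0^∞ ( 1 − (1 − H(z + α))^{1+n_L} ) dz grows faster than any constant multiple of ln L as L → ∞. -/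
open MeasureTheory Real Filter

/-- If `H : [0,∞) → [0,1]` is monotone decreasing with unbounded support, then for any
`α > 0`, `∫_0^∞ (1 − (1 − H(z+α))^{1+n}) dz → ∞` as `n → ∞`; in particular, with
`R_L = γ ln L` and `n_L = ⌊δ R_L⌋`, `R_L ∫_0^∞ (1 − (1 − H(z+α))^{1+n_L}) dz` grows
faster than any constant multiple of `ln L`. -/
theorem stmt_8 (H : ℝ → ℝ)
    (hmeas : Measurable H) (h0 : ∀ x, 0 ≤ H x) (h1 : ∀ x, H x ≤ 1)
    (hant : AntitoneOn H (Set.Ici 0))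
    (hsupp : ∀ r : ℝ, 0 ≤ r → 0 < ∫⁻ x in Set.Ioi r, ENNReal.ofReal (H x))
    (α : ℝ) (hα : 0 < α) :
    Tendsto
      (fun n : ℕ => ∫⁻ z in Set.Ioi (0:ℝ),
        ENNReal.ofReal (1 - (1 - H (z + α)) ^ (1 + n)))
      atTop (nhds ⊤)
    ∧ ∀ γ δ : ℝ, 0 < γ → 0 < δ → ∀ c : ℝ, 0 < c →
        ∀ᶠ L : ℝ in atTop,
          ENNReal.ofReal (c * Real.log L)
            ≤ ENNReal.ofReal (γ * Real.log L) *
                ∫⁻ z in Set.Ioi (0:ℝ),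
                  ENNReal.ofReal
                    (1 - (1 - H (z + α)) ^ (1 + Nat.floor (δ * (γ * Real.log L)))) := by
  -- H is strictly positive on [0,∞)
  have hpos : ∀ x : ℝ, 0 ≤ x → 0 < H x := by
    intro x hx
    rcases lt_or_eq_of_le (h0 x) with h | h
    · exact h
    · exfalso
      have hz : ∀ y ∈ Set.Ioi x, ENNReal.ofReal (H y) = (0 : ENNReal) := by
        intro y hy
        have hy' : x ≤ y := le_of_lt hy
        have h2 : H y ≤ H x := hant hx (hx.trans hy') hy'
        have h3 : H y = 0 := le_antisymm (h.symm ▸ h2) (h0 y)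
        simp [h3]
      have hzero : (∫⁻ y in Set.Ioi x, ENNReal.ofReal (H y)) = 0 := by
        rw [setLIntegral_congr_fun measurableSet_Ioi hz]
        simp
      exact absurd hzero (ne_of_gt (hsupp x hx))
  set f : ℕ → ℝ → ENNReal :=
    fun n z => ENNReal.ofReal (1 - (1 - H (z + α)) ^ (1 + n)) with hf
  have ht0 : ∀ z : ℝ, 0 ≤ 1 - H (z + α) := fun z => by linarith [h1 (z + α)]
  have ht1 : ∀ z : ℝ, 1 - H (z + α) ≤ 1 := fun z => by linarith [h0 (z + α)]
  have hmono : ∀ z, Monotone fun n => f n z := by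
    intro z m n hmn
    apply ENNReal.ofReal_le_ofReal
    have := pow_le_pow_of_le_one (ht0 z) (ht1 z)
      (by omega : 1 + m ≤ 1 + n)
    linarith
  have hmeas_f : ∀ n, Measurable (f n) := by
    intro n
    exact (measurable_const.sub ((measurable_const.sub
      (hmeas.comp (measurable_add_const α))).pow_const _)).ennreal_ofReal
  have htend : ∀ z ∈ Set.Ioi (0:ℝ), Tendsto (fun n => f n z) atTop (nhds 1) := by
    intro z hz
    have hzα : (0:ℝ) ≤ z + α := by
      have : (0:ℝ) < z := hz
      linarith
    have hlt : 1 - H (z + α) < 1 := by linarith [hpos _ hzα]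
    have hp : Tendsto (fun n : ℕ => (1 - H (z + α)) ^ (1 + n)) atTop (nhds 0) := by
      have := (tendsto_pow_atTop_nhds_zero_of_lt_one (ht0 z) hlt).comp
        (tendsto_add_atTop_nat 1)
      simpa [Function.comp_def, add_comm] using this
    have h1' : Tendsto (fun n : ℕ => 1 - (1 - H (z + α)) ^ (1 + n)) atTop (nhds 1) := by
      simpa using tendsto_const_nhds.sub hp
    have := (ENNReal.continuous_ofReal.tendsto 1).comp h1'
    simpa [hf, Function.comp_def] using this
  have hsup : ∀ z ∈ Set.Ioi (0:ℝ), (⨆ n, f n z) = 1 := by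
    intro z hz
    exact tendsto_nhds_unique (tendsto_atTop_iSup (hmono z)) (htend z hz)
  have key : Tendsto
      (fun n : ℕ => ∫⁻ z in Set.Ioi (0:ℝ), f n z) atTop (nhds ⊤) := by
    have mono_int : Monotone fun n => ∫⁻ z in Set.Ioi (0:ℝ), f n z :=
      fun m n h => lintegral_mono fun z => hmono z h
    have h2 := tendsto_atTop_iSup mono_int
    have h3 : (⨆ n, ∫⁻ z in Set.Ioi (0:ℝ), f n z) = ⊤ := by
      rw [← lintegral_iSup (fun n => hmeas_f n) (fun m n h z => hmono z h)]
      rw [setLIntegral_congr_fun measurableSet_Ioi hsup]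
      simp [Real.volume_Ioi]
    rwa [h3] at h2
  refine ⟨key, ?_⟩
  intro γ δ hγ hδ c hc
  have hcγ : ENNReal.ofReal (c / γ) < ⊤ := ENNReal.ofReal_lt_top
  have hev : ∀ᶠ n : ℕ in atTop,
      ENNReal.ofReal (c / γ) ≤ ∫⁻ z in Set.Ioi (0:ℝ), f n z :=
    key.eventually (eventually_ge_nhds hcγ)
  obtain ⟨N, hN⟩ := eventually_atTop.mp hev
  have hLtend : Tendsto (fun L : ℝ => δ * (γ * Real.log L)) atTop atTop :=
    (Real.tendsto_log_atTop.const_mul_atTop hγ).const_mul_atTop hδ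
  filter_upwards [hLtend.eventually_ge_atTop (N : ℝ),
    Real.tendsto_log_atTop.eventually_ge_atTop 0] with L hL hlog
  have hn : N ≤ Nat.floor (δ * (γ * Real.log L)) := Nat.le_floor hL
  have hI := hN _ hn
  have hγlog : 0 ≤ γ * Real.log L := mul_nonneg hγ.le hlog
  calc ENNReal.ofReal (c * Real.log L)
      = ENNReal.ofReal (γ * Real.log L * (c / γ)) := by
        congr 1
        field_simp
    _ = ENNReal.ofReal (γ * Real.log L) * ENNReal.ofReal (c / γ) :=
        ENNReal.ofReal_mul hγlog
    _ ≤ ENNReal.ofReal (γ * Real.log L) *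
          ∫⁻ z in Set.Ioi (0:ℝ), f (Nat.floor (δ * (γ * Real.log L))) z :=
        mul_le_mul_right hI _
end

section
/- Let H : [0,∞) → [0,1] be measurable and integrable, and let R > 0. Then ∫_0^∞ ( 1 − (1 − H(y/R)) exp( −∫_y^∞ H(z/R) dz ) ) dy ≤ ∫_0^∞ ( 1 − exp( −R ∫_{y/R}^∞ H(z) dz ) ) dy + 1. -/
open MeasureTheory Real

/-- Measurability of the tail integral. -/
lemma aux_tail_meas (h : ℝ → ℝ) (hm : Measurable h) :
    Measurable fun y : ℝ => ∫ z in Set.Ioi y, h z := by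
  have hsm : StronglyMeasurable fun p : ℝ × ℝ =>
      ({q : ℝ × ℝ | q.1 < q.2}.indicator (fun q => h q.2) p) :=
    (Measurable.indicator (hm.comp measurable_snd)
      (measurableSet_lt measurable_fst measurable_snd)).stronglyMeasurable
  have hkey : StronglyMeasurable fun x : ℝ =>
      ∫ z, ({q : ℝ × ℝ | q.1 < q.2}.indicator (fun q => h q.2)) (x, z) :=
    hsm.integral_prod_right'
  have heq : (fun y : ℝ => ∫ z in Set.Ioi y, h z)
      = fun x : ℝ => ∫ z, ({q : ℝ × ℝ | q.1 < q.2}.indicator (fun q => h q.2)) (x, z) := by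
    funext x
    rw [← integral_indicator measurableSet_Ioi]
    refine integral_congr_ae (Filter.Eventually.of_forall fun z => ?_)
    by_cases hz : x < z <;> simp [Set.indicator, hz, Set.mem_Ioi]
  rw [heq]
  exact hkey.measurable

/-- Key bound: `∫_0^∞ h(y) exp(-∫_y^∞ h) dy ≤ 1` for measurable `h` with `0 ≤ h ≤ 1`
integrable on `(0,∞)`. -/
lemma aux_le_one (h : ℝ → ℝ) (hm : Measurable h) (h0 : ∀ x, 0 ≤ h x) (h1 : ∀ x, h x ≤ 1)
    (hint : IntegrableOn h (Set.Ioi 0)) :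
    (∫ y in Set.Ioi (0:ℝ), h y * Real.exp (-(∫ z in Set.Ioi y, h z))) ≤ 1 := by
  have hgm : Measurable fun y : ℝ => ∫ z in Set.Ioi y, h z := aux_tail_meas h hm
  have hg0 : ∀ y : ℝ, 0 ≤ ∫ z in Set.Ioi y, h z := fun y =>
    setIntegral_nonneg measurableSet_Ioi fun z _ => h0 z
  set ν := volume.restrict (Set.Ioi (0:ℝ)) with hν
  set μ := ν.withDensity (fun y => ENNReal.ofReal (h y)) with hμ
  -- the tail-measure bound
  have key : ∀ t : ℝ, t ∈ Set.Ioi (0:ℝ) →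
      μ {y : ℝ | t ≤ Real.exp (-(∫ z in Set.Ioi y, h z))} ≤ ENNReal.ofReal (-Real.log t) := by
    intro t ht
    have ht' : 0 < t := ht
    have hset : {y : ℝ | t ≤ Real.exp (-(∫ z in Set.Ioi y, h z))}
        = {y : ℝ | (∫ z in Set.Ioi y, h z) ≤ -Real.log t} := by
      ext y
      simp only [Set.mem_setOf_eq]
      rw [← Real.log_le_iff_le_exp ht']
      constructor <;> intro h' <;> linarith
    rw [hset]
    set s := -Real.log t with hs_def
    have hSm : MeasurableSet {y : ℝ | (∫ z in Set.Ioi y, h z) ≤ s} := hgm measurableSet_Iic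
    rw [hμ, withDensity_apply _ hSm, hν, Measure.restrict_restrict hSm]
    set S' := {y : ℝ | (∫ z in Set.Ioi y, h z) ≤ s} ∩ Set.Ioi 0 with hS'
    rcases Set.eq_empty_or_nonempty S' with hemp | hne
    · rw [hemp]; simp
    · have hbdd : BddBelow S' := ⟨0, fun y hy => (hy.2 : (0:ℝ) < y).le⟩
      set a := sInf S' with ha_def
      have ha0 : 0 ≤ a := le_csInf hne fun y hy => hy.2.le
      have hga : (∫ z in Set.Ioi a, h z) ≤ s := by
        by_contra hcon
        push_neg at hcon
        set ε := ((∫ z in Set.Ioi a, h z) - s) / 2 with hε_def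
        have hε : 0 < ε := by simp only [hε_def]; linarith
        obtain ⟨y, hyS, hya⟩ : ∃ y ∈ S', y < a + ε :=
          (csInf_lt_iff hbdd hne).1 (by linarith)
        have hay : a ≤ y := csInf_le hbdd hyS
        have hy0 : (0:ℝ) < y := hyS.2
        have hsub1 : Set.Ioc a y ⊆ Set.Ioi (0:ℝ) := fun z hz => lt_of_le_of_lt ha0 hz.1
        have hsub2 : Set.Ioi y ⊆ Set.Ioi (0:ℝ) := Set.Ioi_subset_Ioi hy0.le
        have hsplit : (∫ z in Set.Ioi a, h z)
            = (∫ z in Set.Ioc a y, h z) + ∫ z in Set.Ioi y, h z := by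
          rw [← setIntegral_union (Set.Ioc_disjoint_Ioi le_rfl) measurableSet_Ioi
            (hint.mono_set hsub1) (hint.mono_set hsub2), Set.Ioc_union_Ioi_eq_Ioi hay]
        have hIoc : (∫ z in Set.Ioc a y, h z) ≤ y - a := by
          have hb : (∫ z in Set.Ioc a y, h z) ≤ ∫ _z in Set.Ioc a y, (1:ℝ) :=
            setIntegral_mono_on (hint.mono_set hsub1)
              (integrableOn_const measure_Ioc_lt_top.ne) measurableSet_Ioc
              fun x _ => h1 x
          simpa [Real.volume_Ioc, ENNReal.toReal_ofReal (sub_nonneg.2 hay), max_eq_left (sub_nonneg.2 hay)] using hb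
        have htail : (∫ z in Set.Ioi y, h z) ≤ s := hyS.1
        linarith
      have hsub : S' ⊆ Set.Ici a := fun y hy => csInf_le hbdd hy
      calc (∫⁻ y in S', ENNReal.ofReal (h y))
          ≤ ∫⁻ y in Set.Ici a, ENNReal.ofReal (h y) := lintegral_mono_set hsub
        _ = ∫⁻ y in Set.Ioi a, ENNReal.ofReal (h y) := by
            rw [Measure.restrict_congr_set Ioi_ae_eq_Ici.symm]
        _ = ENNReal.ofReal (∫ y in Set.Ioi a, h y) :=
            (ofReal_integral_eq_lintegral_ofReal (hint.mono_set (Set.Ioi_subset_Ioi ha0))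
              (ae_of_all _ h0)).symm
        _ ≤ ENNReal.ofReal s := ENNReal.ofReal_le_ofReal hga
  -- chain of (in)equalities
  have hφm : Measurable fun y : ℝ => h y * Real.exp (-(∫ z in Set.Ioi y, h z)) :=
    hm.mul (hgm.neg.exp)
  have e1 : (∫ y in Set.Ioi (0:ℝ), h y * Real.exp (-(∫ z in Set.Ioi y, h z)))
      = (∫⁻ y in Set.Ioi (0:ℝ),
          ENNReal.ofReal (h y * Real.exp (-(∫ z in Set.Ioi y, h z)))).toReal := by
    rw [integral_eq_lintegral_of_nonneg_ae
      (ae_of_all _ fun y => mul_nonneg (h0 y) (Real.exp_pos _).le) hφm.aestronglyMeasurable]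
  have e2 : (∫⁻ y in Set.Ioi (0:ℝ),
        ENNReal.ofReal (h y * Real.exp (-(∫ z in Set.Ioi y, h z))))
      = ∫⁻ y, ENNReal.ofReal (Real.exp (-(∫ z in Set.Ioi y, h z))) ∂μ := by
    rw [hμ, lintegral_withDensity_eq_lintegral_mul _ hm.ennreal_ofReal
      (g := fun y => ENNReal.ofReal (Real.exp (-(∫ z in Set.Ioi y, h z)))) (hgm.neg.exp.ennreal_ofReal)]
    refine lintegral_congr fun y => ?_
    rw [Pi.mul_apply, ← ENNReal.ofReal_mul (h0 y)]
  have e3 : (∫⁻ y, ENNReal.ofReal (Real.exp (-(∫ z in Set.Ioi y, h z))) ∂μ)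
      = ∫⁻ t in Set.Ioi 0, μ {y : ℝ | t ≤ Real.exp (-(∫ z in Set.Ioi y, h z))} :=
    lintegral_eq_lintegral_meas_le μ (ae_of_all _ fun y => (Real.exp_pos _).le)
      (hgm.neg.exp.aemeasurable)
  have e4 : (∫⁻ t in Set.Ioi (0:ℝ), μ {y : ℝ | t ≤ Real.exp (-(∫ z in Set.Ioi y, h z))})
      ≤ ∫⁻ t in Set.Ioi (0:ℝ), ENNReal.ofReal (-Real.log t) :=
    setLIntegral_mono (Real.measurable_log.neg.ennreal_ofReal) key
  have e5 : (∫⁻ t in Set.Ioi (0:ℝ), ENNReal.ofReal (-Real.log t))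
      = ∫⁻ t in Set.Ioi (0:ℝ), ν {a : ℝ | t ≤ Real.exp (-a)} := by
    refine setLIntegral_congr_fun measurableSet_Ioi (fun t ht => ?_)
    have ht' : (0:ℝ) < t := ht
    have hseti : {a : ℝ | t ≤ Real.exp (-a)} = Set.Iic (-Real.log t) := by
      ext a
      simp only [Set.mem_setOf_eq, Set.mem_Iic]
      rw [← Real.log_le_iff_le_exp ht']
      constructor <;> intro h' <;> linarith
    rw [hseti, hν, Measure.restrict_apply' measurableSet_Ioi, Set.inter_comm,
      Set.Ioi_inter_Iic, Real.volume_Ioc, sub_zero]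
  have e6 : (∫⁻ t in Set.Ioi (0:ℝ), ν {a : ℝ | t ≤ Real.exp (-a)})
      = ∫⁻ a in Set.Ioi (0:ℝ), ENNReal.ofReal (Real.exp (-a)) :=
    (lintegral_eq_lintegral_meas_le ν (ae_of_all _ fun a => (Real.exp_pos _).le)
      (measurable_id.neg.exp.aemeasurable)).symm
  have e7 : (∫⁻ a in Set.Ioi (0:ℝ), ENNReal.ofReal (Real.exp (-a))) = 1 := by
    have hi : IntegrableOn (fun a : ℝ => Real.exp (-a)) (Set.Ioi 0) := by
      simpa using exp_neg_integrableOn_Ioi 0 (zero_lt_one)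
    rw [← ofReal_integral_eq_lintegral_ofReal hi (ae_of_all _ fun a => (Real.exp_pos _).le),
      integral_exp_neg_Ioi_zero, ENNReal.ofReal_one]
  have hle : (∫⁻ y in Set.Ioi (0:ℝ),
      ENNReal.ofReal (h y * Real.exp (-(∫ z in Set.Ioi y, h z)))) ≤ 1 := by
    rw [e2, e3]
    exact e4.trans (le_of_eq (e5.trans (e6.trans e7)))
  rw [e1]
  calc (∫⁻ y in Set.Ioi (0:ℝ),
      ENNReal.ofReal (h y * Real.exp (-(∫ z in Set.Ioi y, h z)))).toReal
      ≤ (1 : ENNReal).toReal := ENNReal.toReal_mono ENNReal.one_ne_top hle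
    _ = 1 := ENNReal.toReal_one

/-- For `H : [0,∞) → [0,1]` measurable, integrable and `R > 0`,
`∫_0^∞ (1 − (1 − H(y/R)) exp(−∫_y^∞ H(z/R) dz)) dy
  ≤ ∫_0^∞ (1 − exp(−R ∫_{y/R}^∞ H(z) dz)) dy + 1`. -/
theorem stmt_12 (H : ℝ → ℝ)
    (hmeas : Measurable H) (h0 : ∀ x, 0 ≤ H x) (h1 : ∀ x, H x ≤ 1)
    (hint : IntegrableOn H (Set.Ioi 0)) (R : ℝ) (hR : 0 < R) :
    ∫ y in Set.Ioi (0:ℝ),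
        (1 - (1 - H (y / R)) * Real.exp (-(∫ z in Set.Ioi y, H (z / R))))
      ≤ (∫ y in Set.Ioi (0:ℝ),
          (1 - Real.exp (-(R * ∫ z in Set.Ioi (y / R), H z)))) + 1 := by
  have hhm : Measurable fun y : ℝ => H (y / R) := hmeas.comp (measurable_id.div_const R)
  have hhint : IntegrableOn (fun y : ℝ => H (y / R)) (Set.Ioi 0) := by
    have h2 : IntegrableOn (fun x : ℝ => H (x * R⁻¹)) (Set.Ioi 0) := by
      rw [integrableOn_Ioi_comp_mul_right_iff H 0 (inv_pos.2 hR), zero_mul]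
      exact hint
    simpa [div_eq_mul_inv] using h2
  have hgm : Measurable fun y : ℝ => ∫ z in Set.Ioi y, H (z / R) :=
    aux_tail_meas _ hhm
  -- change of variables: `R * ∫_{y/R}^∞ H = ∫_y^∞ H(·/R)`
  have hA : ∀ y : ℝ, R * ∫ z in Set.Ioi (y / R), H z = ∫ z in Set.Ioi y, H (z / R) := by
    intro y
    have h2 := integral_comp_mul_right_Ioi H y (inv_pos.2 hR)
    rw [inv_inv, smul_eq_mul] at h2
    calc R * ∫ z in Set.Ioi (y / R), H z
        = R * ∫ z in Set.Ioi (y * R⁻¹), H z := by rw [div_eq_mul_inv]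
      _ = ∫ z in Set.Ioi y, H (z * R⁻¹) := h2.symm
      _ = ∫ z in Set.Ioi y, H (z / R) := by simp [div_eq_mul_inv]
  simp_rw [hA]
  -- integrability of `h · exp(-g)`
  have hφint : IntegrableOn
      (fun y : ℝ => H (y / R) * Real.exp (-(∫ z in Set.Ioi y, H (z / R)))) (Set.Ioi 0) := by
    refine Integrable.mono' hhint (hhm.mul hgm.neg.exp).aestronglyMeasurable ?_
    filter_upwards with y
    rw [Real.norm_eq_abs, abs_of_nonneg (mul_nonneg (h0 _) (Real.exp_pos _).le)]
    have hg0 : 0 ≤ ∫ z in Set.Ioi y, H (z / R) :=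
      setIntegral_nonneg measurableSet_Ioi fun z _ => h0 _
    calc H (y / R) * Real.exp (-(∫ z in Set.Ioi y, H (z / R)))
        ≤ H (y / R) * 1 := by
          refine mul_le_mul_of_nonneg_left ?_ (h0 _)
          exact Real.exp_le_one_iff.2 (by linarith)
      _ = H (y / R) := mul_one _
  have hD : (∫ y in Set.Ioi (0:ℝ),
      H (y / R) * Real.exp (-(∫ z in Set.Ioi y, H (z / R)))) ≤ 1 :=
    aux_le_one (fun y => H (y / R)) hhm (fun x => h0 _) (fun x => h1 _) hhint
  by_cases hK : IntegrableOn
      (fun y : ℝ => 1 - Real.exp (-(∫ z in Set.Ioi y, H (z / R)))) (Set.Ioi 0)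
  · have hsplit : (∫ y in Set.Ioi (0:ℝ),
        (1 - (1 - H (y / R)) * Real.exp (-(∫ z in Set.Ioi y, H (z / R)))))
        = ∫ y in Set.Ioi (0:ℝ),
          ((1 - Real.exp (-(∫ z in Set.Ioi y, H (z / R))))
            + H (y / R) * Real.exp (-(∫ z in Set.Ioi y, H (z / R)))) := by
      refine setIntegral_congr_fun measurableSet_Ioi fun y _ => ?_
      ring
    rw [hsplit, integral_add hK hφint]
    linarith
  · have hLni : ¬ IntegrableOn
        (fun y : ℝ => 1 - (1 - H (y / R)) * Real.exp (-(∫ z in Set.Ioi y, H (z / R))))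
        (Set.Ioi 0) := by
      intro hL
      apply hK
      have heq : (fun y : ℝ => 1 - Real.exp (-(∫ z in Set.Ioi y, H (z / R))))
          = fun y : ℝ => (1 - (1 - H (y / R)) * Real.exp (-(∫ z in Set.Ioi y, H (z / R))))
            - H (y / R) * Real.exp (-(∫ z in Set.Ioi y, H (z / R))) := by
        funext y; ring
      rw [heq]
      exact hL.sub hφint
    rw [integral_undef hLni, integral_undef hK]
    norm_num
end

section
/- Let H : [0,∞) → [0,∞) be measurable and integrable, and let R > 0 and x > 0. Then ∫_0^∞ ( 1 − exp( −R ∫_{y/R}^∞ H(z) dz ) ) dy ≤ R x + R² ∫_x^∞ z H(z) dz. -/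
open MeasureTheory Real

lemma aux_swap_13 (H : ℝ → ℝ) (hmeas : Measurable H) (R a : ℝ) (hR : 0 < R) :
    ∫⁻ y in Set.Ioi a, ∫⁻ z in Set.Ioi (y / R), ENNReal.ofReal (H z) =
      ∫⁻ z, ENNReal.ofReal (H z) * ENNReal.ofReal (R * z - a) := by
  set k : ℝ × ℝ → ENNReal := fun q =>
    Set.indicator {q : ℝ × ℝ | q.1 / R < q.2} (fun q => ENNReal.ofReal (H q.2)) q with hk_def
  have hset : MeasurableSet {q : ℝ × ℝ | q.1 / R < q.2} :=
    measurableSet_lt (measurable_fst.div_const R) measurable_snd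
  have hk : Measurable k :=
    Measurable.indicator (ENNReal.measurable_ofReal.comp (hmeas.comp measurable_snd)) hset
  have h1 : ∀ y : ℝ, (∫⁻ z in Set.Ioi (y / R), ENNReal.ofReal (H z)) = ∫⁻ z, k (y, z) := by
    intro y
    rw [← lintegral_indicator measurableSet_Ioi]
    apply lintegral_congr
    intro z
    simp [hk_def, Set.indicator, Set.mem_Ioi]
  have h2 : ∀ z : ℝ, (∫⁻ y in Set.Ioi a, k (y, z)) =
      ENNReal.ofReal (H z) * ENNReal.ofReal (R * z - a) := by
    intro z
    have : (fun y => k (y, z)) = Set.indicator (Set.Iio (R * z)) (fun _ => ENNReal.ofReal (H z)) := by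
      ext y
      simp only [hk_def, Set.indicator, Set.mem_setOf_eq, Set.mem_Iio, div_lt_iff₀ hR]
      rw [mul_comm]
    rw [this, lintegral_indicator measurableSet_Iio, setLIntegral_const,
      Measure.restrict_apply measurableSet_Iio]
    have : Set.Iio (R * z) ∩ Set.Ioi a = Set.Ioo a (R * z) := by
      ext t; simp [Set.mem_Ioo, and_comm]
    rw [this, Real.volume_Ioo]
  simp_rw [h1]
  rw [lintegral_lintegral_swap hk.aemeasurable]
  simp_rw [h2]

/-- For `H : [0,∞) → [0,∞)` measurable and integrable, and `R, x > 0`,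
`∫_0^∞ (1 − exp(−R ∫_{y/R}^∞ H(z) dz)) dy ≤ R x + R² ∫_x^∞ z H(z) dz`. -/
theorem stmt_13 (H : ℝ → ℝ)
    (hmeas : Measurable H) (h0 : ∀ x, 0 ≤ H x)
    (hint : IntegrableOn H (Set.Ioi 0)) (R x : ℝ) (hR : 0 < R) (hx : 0 < x) :
    ∫ y in Set.Ioi (0:ℝ), (1 - Real.exp (-(R * ∫ z in Set.Ioi (y / R), H z)))
      ≤ R * x + R ^ 2 * ∫ z in Set.Ioi x, z * H z := by
  have hRHS2 : 0 ≤ ∫ z in Set.Ioi x, z * H z :=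
    setIntegral_nonneg measurableSet_Ioi fun z hz =>
      mul_nonneg (le_of_lt (lt_trans hx hz)) (h0 z)
  have hRHS : 0 ≤ R * x + R ^ 2 * ∫ z in Set.Ioi x, z * H z := by positivity
  -- the lintegral version of the inner integral
  set Gl : ℝ → ENNReal := fun y => ∫⁻ z in Set.Ioi (y / R), ENNReal.ofReal (H z) with hGl_def
  have key : ∀ y : ℝ, (∫ z in Set.Ioi (y / R), H z) = (Gl y).toReal := by
    intro y
    rw [integral_eq_lintegral_of_nonneg_ae (Filter.Eventually.of_forall fun z => h0 z)
      hmeas.aestronglyMeasurable]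
  have hGlmeas : Measurable Gl := by
    have hset : MeasurableSet {q : ℝ × ℝ | q.1 / R < q.2} :=
      measurableSet_lt (measurable_fst.div_const R) measurable_snd
    have hk : Measurable fun q : ℝ × ℝ =>
        Set.indicator {q : ℝ × ℝ | q.1 / R < q.2} (fun q => ENNReal.ofReal (H q.2)) q :=
      Measurable.indicator (ENNReal.measurable_ofReal.comp (hmeas.comp measurable_snd)) hset
    have : Gl = fun y => ∫⁻ z,
        Set.indicator {q : ℝ × ℝ | q.1 / R < q.2} (fun q => ENNReal.ofReal (H q.2)) (y, z) := by
      funext y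
      show (∫⁻ z in Set.Ioi (y / R), ENNReal.ofReal (H z)) = _
      rw [← lintegral_indicator measurableSet_Ioi]
      apply lintegral_congr
      intro z
      simp [Set.indicator, Set.mem_Ioi]
    rw [this]
    exact hk.lintegral_prod_right'
  have hGlt : ∀ y : ℝ, 0 < y → Gl y < ⊤ := by
    intro y hy
    have hsub : Set.Ioi (y / R) ⊆ Set.Ioi (0:ℝ) := by
      intro z hz
      exact lt_trans (div_pos hy hR) hz
    have hH : IntegrableOn H (Set.Ioi (y / R)) := hint.mono_set hsub
    have := hH.2
    rw [hasFiniteIntegral_def] at this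
    refine lt_of_le_of_lt (le_of_eq ?_) this
    apply lintegral_congr
    intro z
    rw [← ofReal_norm_eq_enorm, Real.norm_of_nonneg (h0 z)]
  -- the measurable version of the integrand
  set f : ℝ → ℝ := fun y => 1 - Real.exp (-(R * (Gl y).toReal)) with hf_def
  have hfm : Measurable f :=
    (measurable_const.sub (((hGlmeas.ennreal_toReal.const_mul R).neg).exp))
  have hfnn : ∀ y, 0 ≤ f y := by
    intro y
    have : Real.exp (-(R * (Gl y).toReal)) ≤ 1 := by
      rw [Real.exp_le_one_iff]
      have : 0 ≤ R * (Gl y).toReal := mul_nonneg hR.le ENNReal.toReal_nonneg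
      linarith
    simp only [hf_def]; linarith
  have hfle1 : ∀ y, f y ≤ 1 := by
    intro y
    have := Real.exp_pos (-(R * (Gl y).toReal))
    simp only [hf_def]; linarith
  have hfleG : ∀ y, f y ≤ R * (Gl y).toReal := by
    intro y
    have := Real.add_one_le_exp (-(R * (Gl y).toReal))
    simp only [hf_def]; linarith
  have hInt_eq : (∫ y in Set.Ioi (0:ℝ), (1 - Real.exp (-(R * ∫ z in Set.Ioi (y / R), H z))))
      = ∫ y in Set.Ioi (0:ℝ), f y := by
    simp_rw [key]; rfl
  rw [hInt_eq]
  by_cases hf : IntegrableOn f (Set.Ioi 0)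
  · -- f integrable
    have h1 : ∫ y in Set.Ioi (0:ℝ), f y
        = (∫⁻ y in Set.Ioi (0:ℝ), ENNReal.ofReal (f y)).toReal :=
      integral_eq_lintegral_of_nonneg_ae (Filter.Eventually.of_forall hfnn)
        hfm.aestronglyMeasurable
    by_cases hzH : IntegrableOn (fun z => z * H z) (Set.Ioi x)
    · -- main case
      rw [h1]
      apply ENNReal.toReal_le_of_le_ofReal hRHS
      have hsplit : Set.Ioi (0:ℝ) = Set.Ioc 0 (R * x) ∪ Set.Ioi (R * x) :=
        (Set.Ioc_union_Ioi_eq_Ioi (by positivity)).symm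
      have hdisj : Disjoint (Set.Ioc (0:ℝ) (R * x)) (Set.Ioi (R * x)) :=
        Set.Ioc_disjoint_Ioi le_rfl
      rw [hsplit, lintegral_union measurableSet_Ioi hdisj]
      have hA : (∫⁻ y in Set.Ioc (0:ℝ) (R * x), ENNReal.ofReal (f y)) ≤ ENNReal.ofReal (R * x) := by
        calc (∫⁻ y in Set.Ioc (0:ℝ) (R * x), ENNReal.ofReal (f y))
            ≤ ∫⁻ _ in Set.Ioc (0:ℝ) (R * x), 1 := by
              apply lintegral_mono
              intro y
              exact ENNReal.ofReal_le_one.mpr (hfle1 y)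
          _ = volume (Set.Ioc (0:ℝ) (R * x)) := by rw [setLIntegral_one]
          _ = ENNReal.ofReal (R * x) := by rw [Real.volume_Ioc, sub_zero]
      have hB : (∫⁻ y in Set.Ioi (R * x), ENNReal.ofReal (f y))
          ≤ ENNReal.ofReal (R ^ 2 * ∫ z in Set.Ioi x, z * H z) := by
        calc (∫⁻ y in Set.Ioi (R * x), ENNReal.ofReal (f y))
            ≤ ∫⁻ y in Set.Ioi (R * x), ENNReal.ofReal R * Gl y := by
              apply setLIntegral_mono (hGlmeas.const_mul _)
              intro y hy
              have hy0 : 0 < y := lt_trans (by positivity) hy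
              calc ENNReal.ofReal (f y) ≤ ENNReal.ofReal (R * (Gl y).toReal) :=
                    ENNReal.ofReal_le_ofReal (hfleG y)
                _ = ENNReal.ofReal R * ENNReal.ofReal ((Gl y).toReal) :=
                    ENNReal.ofReal_mul hR.le
                _ = ENNReal.ofReal R * Gl y := by
                    rw [ENNReal.ofReal_toReal (hGlt y hy0).ne]
          _ = ENNReal.ofReal R * ∫⁻ y in Set.Ioi (R * x), Gl y := lintegral_const_mul _ hGlmeas
          _ = ENNReal.ofReal R * ∫⁻ z, ENNReal.ofReal (H z) * ENNReal.ofReal (R * z - R * x) := by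
              rw [hGl_def, aux_swap_13 H hmeas R (R * x) hR]
          _ ≤ ENNReal.ofReal R * ∫⁻ z,
                Set.indicator (Set.Ioi x) (fun z => ENNReal.ofReal R * ENNReal.ofReal (z * H z)) z := by
              gcongr with z
              by_cases hzx : x < z
              · rw [Set.indicator_of_mem (Set.mem_Ioi.mpr hzx)]
                calc ENNReal.ofReal (H z) * ENNReal.ofReal (R * z - R * x)
                    ≤ ENNReal.ofReal (H z) * ENNReal.ofReal (R * z) := by
                      gcongr
                      linarith [mul_pos hR hx]
                  _ = ENNReal.ofReal R * ENNReal.ofReal (z * H z) := by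
                      rw [← ENNReal.ofReal_mul (h0 z), ← ENNReal.ofReal_mul hR.le]
                      ring_nf
              · rw [Set.indicator_of_notMem (fun h => hzx (Set.mem_Ioi.mp h))]
                have : R * z - R * x ≤ 0 := by
                  push_neg at hzx
                  nlinarith
                rw [ENNReal.ofReal_of_nonpos this, mul_zero]
          _ = ENNReal.ofReal R * ∫⁻ z in Set.Ioi x, ENNReal.ofReal R * ENNReal.ofReal (z * H z) := by
              rw [lintegral_indicator measurableSet_Ioi]
          _ = ENNReal.ofReal R * (ENNReal.ofReal R * ∫⁻ z in Set.Ioi x, ENNReal.ofReal (z * H z)) := by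
              have hm : Measurable fun z : ℝ => ENNReal.ofReal (z * H z) := by fun_prop
              rw [lintegral_const_mul _ hm]
          _ = ENNReal.ofReal R * (ENNReal.ofReal R
                * ENNReal.ofReal (∫ z in Set.Ioi x, z * H z)) := by
              rw [ofReal_integral_eq_lintegral_ofReal hzH
                ((ae_restrict_iff' measurableSet_Ioi).mpr (Filter.Eventually.of_forall
                  fun z hz => mul_nonneg (hx.trans hz).le (h0 z)))]
          _ = ENNReal.ofReal (R ^ 2 * ∫ z in Set.Ioi x, z * H z) := by
              rw [ENNReal.ofReal_mul (by positivity : (0:ℝ) ≤ R ^ 2)]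
              rw [sq, ENNReal.ofReal_mul hR.le]
              ring
      calc (∫⁻ y in Set.Ioc (0:ℝ) (R * x), ENNReal.ofReal (f y))
            + ∫⁻ y in Set.Ioi (R * x), ENNReal.ofReal (f y)
          ≤ ENNReal.ofReal (R * x) + ENNReal.ofReal (R ^ 2 * ∫ z in Set.Ioi x, z * H z) :=
            add_le_add hA hB
        _ = ENNReal.ofReal (R * x + R ^ 2 * ∫ z in Set.Ioi x, z * H z) := by
            rw [ENNReal.ofReal_add (by positivity) (by positivity)]
    · -- z * H z not integrable: contradiction with hf
      exfalso
      have hfin : (∫⁻ y in Set.Ioi (0:ℝ), ENNReal.ofReal (f y)) < ⊤ := by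
        have h2 := hf.2
        rw [hasFiniteIntegral_def] at h2
        refine lt_of_le_of_lt (le_of_eq ?_) h2
        apply lintegral_congr
        intro y
        rw [← ofReal_norm_eq_enorm, Real.norm_of_nonneg (hfnn y)]
      set M : ℝ := ∫ z in Set.Ioi (0:ℝ), H z with hM_def
      have hM : ∀ y : ℝ, 0 < y → (Gl y).toReal ≤ M := by
        intro y hy
        rw [← key y]
        apply setIntegral_mono_set hint
        · exact (ae_restrict_iff' measurableSet_Ioi).mpr
            (Filter.Eventually.of_forall fun z _ => h0 z)
        · exact Filter.Eventually.of_forall fun z hz => lt_trans (div_pos hy hR) hz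
      set c : ℝ := Real.exp (-(R * M)) * R with hc_def
      have hc : 0 < c := mul_pos (Real.exp_pos _) hR
      have hlow : ∀ y ∈ Set.Ioi (0:ℝ), ENNReal.ofReal c * Gl y ≤ ENNReal.ofReal (f y) := by
        intro y hy
        have hy0 : (0:ℝ) < y := hy
        set t : ℝ := R * (Gl y).toReal with ht_def
        have ht0 : 0 ≤ t := mul_nonneg hR.le ENNReal.toReal_nonneg
        have htM : t ≤ R * M := by
          have := hM y hy0
          nlinarith
        have hexp1 : Real.exp (-t) * Real.exp t = 1 := by
          rw [← Real.exp_add]; simp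
        have hkey : Real.exp (-(R * M)) * t ≤ 1 - Real.exp (-t) := by
          have h1 := Real.add_one_le_exp t
          have h2 := Real.exp_pos (-t)
          have h3 : Real.exp (-(R * M)) ≤ Real.exp (-t) :=
            Real.exp_le_exp.mpr (by linarith)
          nlinarith
        have hfy : c * (Gl y).toReal ≤ f y := by
          simp only [hf_def]
          calc c * (Gl y).toReal = Real.exp (-(R * M)) * t := by rw [ht_def, hc_def]; ring
            _ ≤ 1 - Real.exp (-t) := hkey
        calc ENNReal.ofReal c * Gl y
            = ENNReal.ofReal c * ENNReal.ofReal ((Gl y).toReal) := by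
              rw [ENNReal.ofReal_toReal (hGlt y hy0).ne]
          _ = ENNReal.ofReal (c * (Gl y).toReal) := (ENNReal.ofReal_mul hc.le).symm
          _ ≤ ENNReal.ofReal (f y) := ENNReal.ofReal_le_ofReal hfy
      have hInf : (∫⁻ z in Set.Ioi x, ENNReal.ofReal (z * H z)) = ⊤ := by
        by_contra hne
        apply hzH
        refine ⟨(measurable_id.mul hmeas).aestronglyMeasurable, ?_⟩
        rw [hasFiniteIntegral_def]
        have heq : (∫⁻ z in Set.Ioi x, ‖z * H z‖ₑ)
            = ∫⁻ z in Set.Ioi x, ENNReal.ofReal (z * H z) := by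
          apply setLIntegral_congr_fun measurableSet_Ioi
          intro z hz
          beta_reduce
          rw [← ofReal_norm_eq_enorm,
            Real.norm_of_nonneg (mul_nonneg (hx.trans hz).le (h0 z))]
        rw [heq]
        exact lt_top_iff_ne_top.mpr hne
      have hbig : (⊤ : ENNReal) ≤ ∫⁻ y in Set.Ioi (0:ℝ), ENNReal.ofReal (f y) := by
        calc (⊤ : ENNReal) = ENNReal.ofReal c * (ENNReal.ofReal R
              * ∫⁻ z in Set.Ioi x, ENNReal.ofReal (z * H z)) := by
              rw [hInf, ENNReal.mul_top (ENNReal.ofReal_pos.mpr hR).ne',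
                ENNReal.mul_top (ENNReal.ofReal_pos.mpr hc).ne']
          _ = ENNReal.ofReal c * ∫⁻ z in Set.Ioi x, ENNReal.ofReal R
                * ENNReal.ofReal (z * H z) := by
              have hm : Measurable fun z : ℝ => ENNReal.ofReal (z * H z) := by fun_prop
              rw [lintegral_const_mul _ hm]
          _ = ENNReal.ofReal c * ∫⁻ z in Set.Ioi x,
                ENNReal.ofReal (H z) * ENNReal.ofReal (R * z - 0) := by
              congr 1
              apply setLIntegral_congr_fun measurableSet_Ioi
              intro z hz
              beta_reduce
              rw [sub_zero, ← ENNReal.ofReal_mul hR.le, ← ENNReal.ofReal_mul (h0 z)]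
              · rw [mul_comm]; ring_nf
          _ ≤ ENNReal.ofReal c * ∫⁻ z, ENNReal.ofReal (H z) * ENNReal.ofReal (R * z - 0) := by
              gcongr
              exact Measure.restrict_le_self
          _ = ENNReal.ofReal c * ∫⁻ y in Set.Ioi (0:ℝ), Gl y := by
              rw [hGl_def, aux_swap_13 H hmeas R 0 hR]
          _ = ∫⁻ y in Set.Ioi (0:ℝ), ENNReal.ofReal c * Gl y :=
              (lintegral_const_mul _ hGlmeas).symm
          _ ≤ ∫⁻ y in Set.Ioi (0:ℝ), ENNReal.ofReal (f y) :=
              setLIntegral_mono ((ENNReal.measurable_ofReal.comp hfm)) hlow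
      exact absurd (le_antisymm le_top hbig) (hfin.ne)
  · rw [integral_undef hf]
    exact hRHS
end

section
/- Let H(r) = β exp(−(r/r_c)^η) with β > 0, r_c > 0, η > 0, and let θ = max{1/η, 2/η − 1}. Then limsup_{R → ∞} (1 / (R (ln R)^θ)) ∫_0^∞ ( 1 − exp( −R ∫_{y/R}^∞ H(z) dz ) ) dy ≤ r_c + β r_c² / η. -/
open MeasureTheory Real Filter Set

lemma aux_int_exp {η : ℝ} (hη : 0 < η) {a κ : ℝ} (ha : 0 < a) (hκ : 0 < κ) :
    IntegrableOn (fun z : ℝ => Real.exp (-(κ * (z / a) ^ η))) (Set.Ioi 0) := by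
  have base : IntegrableOn (fun z : ℝ => Real.exp (-(κ * z ^ η))) (Set.Ioi 0) := by
    have hf : IntegrableOn (fun y : ℝ => y ^ ((1 - η) / η) * Real.exp (-(κ * y)))
        (Set.Ioi 0) := by
      have := integrableOn_rpow_mul_exp_neg_mul_rpow
        (p := 1) (s := (1 - η) / η) (b := κ) (by
          have : (1 - η) / η + 1 = 1 / η := by field_simp; ring
          nlinarith [one_div_pos.mpr hη]) one_pos hκ
      refine this.congr_fun (fun x hx => ?_) measurableSet_Ioi
      beta_reduce
      rw [Real.rpow_one]
      ring_nf
    have := (integrableOn_Ioi_comp_rpow_iff'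
      (fun y : ℝ => y ^ ((1 - η) / η) * Real.exp (-(κ * y))) (ne_of_gt hη)).mpr hf
    refine this.congr_fun (fun x hx => ?_) measurableSet_Ioi
    have hx0 : (0:ℝ) < x := hx
    have h1 : (x ^ η) ^ ((1 - η) / η) = x ^ (1 - η) := by
      rw [← Real.rpow_mul hx0.le]
      congr 1
      field_simp
    beta_reduce
    rw [smul_eq_mul, h1, ← mul_assoc, ← Real.rpow_add hx0,
      show η - 1 + (1 - η) = 0 by ring, Real.rpow_zero, one_mul]
  have := (integrableOn_Ioi_comp_mul_left_iff
    (fun z : ℝ => Real.exp (-(κ * z ^ η))) 0 (inv_pos.mpr ha)).mpr (by simpa using base)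
  refine this.congr_fun (fun x hx => ?_) measurableSet_Ioi
  rw [div_eq_inv_mul]

set_option maxHeartbeats 1000000 in
/-- For `H(r) = β e^{−(r/r_c)^η}` and `θ = max{1/η, 2/η − 1}`,
`limsup_{R→∞} (1/(R (ln R)^θ)) ∫_0^∞ (1 − exp(−R ∫_{y/R}^∞ H(z) dz)) dy
  ≤ r_c + β r_c²/η`. -/
theorem stmt_17 (β rc η θ : ℝ) (hβ : 0 < β) (hrc : 0 < rc) (hη : 0 < η)
    (hθ : θ = max (1 / η) (2 / η - 1)) :
    Filter.limsup
      (fun R : ℝ =>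
        (1 / (R * (Real.log R) ^ θ)) *
          ∫ y in Set.Ioi (0:ℝ),
            (1 - Real.exp (-(R * ∫ z in Set.Ioi (y / R), β * Real.exp (-((z / rc) ^ η))))))
      Filter.atTop
      ≤ rc + β * rc ^ 2 / η := by
  have hθ1 : 1 / η ≤ θ := hθ ▸ le_max_left _ _
  have hθ0 : 0 ≤ θ := le_trans (by positivity) hθ1
  have hd : 0 < β * rc / η := by positivity
  set c : ℝ := (1 + β * rc / η) ^ η with hc_def
  have hc1 : 1 < c := by
    rw [hc_def]
    exact Real.one_lt_rpow_iff_of_pos (by linarith) |>.mpr (Or.inl ⟨by linarith, hη⟩)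
  set ε : ℝ := c - 1 with hε_def
  have hε : 0 < ε := by simp only [hε_def]; linarith
  set δ : ℝ := ε / (4 * (1 + ε)) with hδ_def
  have hδ : 0 < δ := by positivity
  have hδ2 : δ < 1 / 2 := by
    rw [hδ_def, div_lt_iff₀ (by positivity)]
    nlinarith
  have hkey : (1 - 2 * δ) * c = 1 + ε / 2 := by
    have hc_eq : c = 1 + ε := by simp [hε_def]
    rw [hc_eq, hδ_def]
    field_simp
    ring
  set M : ℝ := ∫ z in Set.Ioi (0:ℝ), Real.exp (-(δ * (z / rc) ^ η)) with hM_def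
  have hM0 : 0 ≤ M := setIntegral_nonneg measurableSet_Ioi (fun z _ => (Real.exp_nonneg _))
  -- basic integrability of H
  have h2base : IntegrableOn (fun z : ℝ => Real.exp (-((z / rc) ^ η))) (Set.Ioi 0) := by
    simpa using aux_int_exp hη hrc one_pos
  have hHint : ∀ t : ℝ, 0 ≤ t →
      IntegrableOn (fun z : ℝ => β * Real.exp (-((z / rc) ^ η))) (Set.Ioi t) :=
    fun t ht => (h2base.mono_set (Set.Ioi_subset_Ioi ht)).const_mul β
  have hInonneg : ∀ t : ℝ, 0 ≤ ∫ z in Set.Ioi t, β * Real.exp (-((z / rc) ^ η)) :=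
    fun t => setIntegral_nonneg measurableSet_Ioi (fun z _ => by positivity)
  have h1δ : 0 < 1 - δ := by linarith
  -- pointwise bound on the tail integral
  have hIle : ∀ x : ℝ, 0 ≤ x →
      (∫ z in Set.Ioi x, β * Real.exp (-((z / rc) ^ η)))
        ≤ β * M * Real.exp (-((1 - δ) * (x / rc) ^ η)) := by
    intro x hx
    have hintδ : IntegrableOn (fun z : ℝ => Real.exp (-(δ * (z / rc) ^ η))) (Set.Ioi x) :=
      (aux_int_exp hη hrc hδ).mono_set (Set.Ioi_subset_Ioi hx)
    have hmain : ∀ z ∈ Set.Ioi x, β * Real.exp (-((z / rc) ^ η)) ≤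
        (β * Real.exp (-((1 - δ) * (x / rc) ^ η))) * Real.exp (-(δ * (z / rc) ^ η)) := by
      intro z hz
      have hz0 : x ≤ z := le_of_lt hz
      have hmono : (x / rc) ^ η ≤ (z / rc) ^ η := by
        apply Real.rpow_le_rpow (by positivity) _ hη.le
        exact by gcongr
      rw [mul_assoc, ← Real.exp_add]
      apply mul_le_mul_of_nonneg_left _ hβ.le
      apply Real.exp_le_exp.mpr
      nlinarith
    calc (∫ z in Set.Ioi x, β * Real.exp (-((z / rc) ^ η)))
        ≤ ∫ z in Set.Ioi x,
            (β * Real.exp (-((1 - δ) * (x / rc) ^ η))) * Real.exp (-(δ * (z / rc) ^ η)) :=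
          setIntegral_mono_on (hHint x hx) (hintδ.const_mul _) measurableSet_Ioi hmain
      _ = (β * Real.exp (-((1 - δ) * (x / rc) ^ η))) *
            ∫ z in Set.Ioi x, Real.exp (-(δ * (z / rc) ^ η)) := integral_const_mul _ _
      _ ≤ (β * Real.exp (-((1 - δ) * (x / rc) ^ η))) * M := by
          apply mul_le_mul_of_nonneg_left _ (by positivity)
          exact setIntegral_mono_set (aux_int_exp hη hrc hδ)
            (ae_of_all _ fun z => Real.exp_nonneg _)
            (HasSubset.Subset.eventuallyLE (Set.Ioi_subset_Ioi hx))
      _ = β * M * Real.exp (-((1 - δ) * (x / rc) ^ η)) := by ring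
  -- continuity of H and of the tail integral
  have hHcont : Continuous (fun z : ℝ => β * Real.exp (-((z / rc) ^ η))) := by
    have h1 : Continuous fun z : ℝ => (z / rc) ^ η := by
      rw [continuous_iff_continuousAt]
      intro x
      exact (Real.continuousAt_rpow_const _ _ (Or.inr hη.le)).comp
        ((continuous_id.div_const rc).continuousAt)
    exact continuous_const.mul (Real.continuous_exp.comp h1.neg)
  have hIcont : ContinuousOn
      (fun x : ℝ => ∫ z in Set.Ioi x, β * Real.exp (-((z / rc) ^ η))) (Set.Ioi 0) := by
    have hprim : Continuous fun x : ℝ =>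
        (∫ z in Set.Ioi (0:ℝ), β * Real.exp (-((z / rc) ^ η)))
          - ∫ t in (0:ℝ)..x, β * Real.exp (-((t / rc) ^ η)) :=
      continuous_const.sub
        (intervalIntegral.continuous_primitive (fun a b => hHcont.intervalIntegrable a b) 0)
    refine hprim.continuousOn.congr (fun x hx => ?_)
    have hx0 : (0:ℝ) < x := hx
    have hsplit : (∫ z in Set.Ioi (0:ℝ), β * Real.exp (-((z / rc) ^ η)))
        = (∫ z in Set.Ioc (0:ℝ) x, β * Real.exp (-((z / rc) ^ η)))
          + ∫ z in Set.Ioi x, β * Real.exp (-((z / rc) ^ η)) := by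
      rw [← setIntegral_union (Set.Ioc_disjoint_Ioi le_rfl) measurableSet_Ioi
        ((hHint 0 le_rfl).mono_set Set.Ioc_subset_Ioi_self) (hHint x hx0.le),
        Set.Ioc_union_Ioi_eq_Ioi hx0.le]
    have hintv : (∫ t in (0:ℝ)..x, β * Real.exp (-((t / rc) ^ η)))
        = ∫ z in Set.Ioc (0:ℝ) x, β * Real.exp (-((z / rc) ^ η)) :=
      intervalIntegral.integral_of_le hx0.le
    simp only [hintv]
    linarith [hsplit]
  -- the key eventual bound
  have hev : ∀ᶠ R in atTop,
      (1 / (R * (Real.log R) ^ θ)) *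
          (∫ y in Set.Ioi (0:ℝ),
            (1 - Real.exp (-(R * ∫ z in Set.Ioi (y / R), β * Real.exp (-((z / rc) ^ η))))))
        ≤ (rc + β * rc ^ 2 / η) + (β * M ^ 2) * R ^ (-(ε / 2)) := by
    filter_upwards [eventually_ge_atTop (Real.exp 1)] with R hR
    have hexp1 : (1:ℝ) < Real.exp 1 := by
      have := Real.add_one_le_exp 1; linarith
    have hR1 : (1:ℝ) < R := lt_of_lt_of_le hexp1 hR
    have hR0 : (0:ℝ) < R := by linarith
    have hlog : 1 ≤ Real.log R := (Real.le_log_iff_exp_le hR0).mpr hR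
    have hlogpos : 0 < Real.log R := by linarith
    have hclog : 0 ≤ c * Real.log R := by nlinarith
    set x0 : ℝ := rc * (c * Real.log R) ^ (1 / η) with hx0_def
    have hx0pos : 0 < x0 := mul_pos hrc (Real.rpow_pos_of_pos (by nlinarith) _)
    set Y : ℝ := R * x0 with hY_def
    have hYpos : 0 < Y := mul_pos hR0 hx0pos
    have hRrc : 0 < R * rc := mul_pos hR0 hrc
    -- dominating function
    set g : ℝ → ℝ := fun y => (R * (β * M)) * Real.exp (-((1 - δ) * (y / (R * rc)) ^ η))
      with hg_def
    have hg_int : IntegrableOn g (Set.Ioi 0) :=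
      (aux_int_exp hη hRrc h1δ).const_mul _
    have hfg : ∀ y ∈ Set.Ioi (0:ℝ),
        (1 - Real.exp (-(R * ∫ z in Set.Ioi (y / R), β * Real.exp (-((z / rc) ^ η))))) ≤ g y := by
      intro y hy
      have hy0 : (0:ℝ) < y := hy
      have hyR : 0 ≤ y / R := by positivity
      have h1 : (1 : ℝ) - Real.exp (-(R * ∫ z in Set.Ioi (y / R),
          β * Real.exp (-((z / rc) ^ η))))
          ≤ R * ∫ z in Set.Ioi (y / R), β * Real.exp (-((z / rc) ^ η)) := by
        have := Real.add_one_le_exp (-(R * ∫ z in Set.Ioi (y / R),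
          β * Real.exp (-((z / rc) ^ η))))
        linarith
      have h2 : R * (∫ z in Set.Ioi (y / R), β * Real.exp (-((z / rc) ^ η)))
          ≤ R * (β * M * Real.exp (-((1 - δ) * ((y / R) / rc) ^ η))) :=
        mul_le_mul_of_nonneg_left (hIle (y / R) hyR) hR0.le
      have h3 : (y / R) / rc = y / (R * rc) := by rw [div_div]
      rw [h3] at h2
      calc (1 : ℝ) - Real.exp (-(R * ∫ z in Set.Ioi (y / R),
            β * Real.exp (-((z / rc) ^ η))))
          ≤ R * ∫ z in Set.Ioi (y / R), β * Real.exp (-((z / rc) ^ η)) := h1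
        _ ≤ R * (β * M * Real.exp (-((1 - δ) * (y / (R * rc)) ^ η))) := h2
        _ = g y := by rw [hg_def]; ring
    have hf0 : ∀ y ∈ Set.Ioi (0:ℝ), 0 ≤
        (1 - Real.exp (-(R * ∫ z in Set.Ioi (y / R), β * Real.exp (-((z / rc) ^ η))))) := by
      intro y hy
      have : Real.exp (-(R * ∫ z in Set.Ioi (y / R), β * Real.exp (-((z / rc) ^ η)))) ≤ 1 := by
        rw [Real.exp_le_one_iff]
        have := hInonneg (y / R)
        nlinarith
      linarith
    have hf1 : ∀ y : ℝ,
        (1 - Real.exp (-(R * ∫ z in Set.Ioi (y / R), β * Real.exp (-((z / rc) ^ η))))) ≤ 1 := by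
      intro y
      have := Real.exp_nonneg (-(R * ∫ z in Set.Ioi (y / R), β * Real.exp (-((z / rc) ^ η))))
      linarith
    -- measurability of the outer integrand
    have hfmeas : AEStronglyMeasurable
        (fun y : ℝ => 1 - Real.exp (-(R * ∫ z in Set.Ioi (y / R),
          β * Real.exp (-((z / rc) ^ η)))))
        (volume.restrict (Set.Ioi 0)) := by
      have hmap : Set.MapsTo (fun y : ℝ => y / R) (Set.Ioi 0) (Set.Ioi 0) :=
        fun y hy => div_pos hy hR0
      have h2 : ContinuousOn (fun y : ℝ => ∫ z in Set.Ioi (y / R),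
          β * Real.exp (-((z / rc) ^ η))) (Set.Ioi 0) :=
        hIcont.comp ((continuous_id.div_const R).continuousOn) hmap
      exact (continuousOn_const.sub
        (Real.continuous_exp.comp_continuousOn ((continuousOn_const.mul h2).neg))).aestronglyMeasurable
        measurableSet_Ioi
    have hf_int : IntegrableOn
        (fun y : ℝ => 1 - Real.exp (-(R * ∫ z in Set.Ioi (y / R),
          β * Real.exp (-((z / rc) ^ η))))) (Set.Ioi 0) := by
      apply Integrable.mono' hg_int hfmeas
      filter_upwards [ae_restrict_mem measurableSet_Ioi] with y hy
      rw [Real.norm_eq_abs, abs_of_nonneg (hf0 y hy)]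
      exact hfg y hy
    -- exponent lower bound on the tail region
    have hx0rc : Y / (R * rc) = (c * Real.log R) ^ (1 / η) := by
      rw [hY_def, hx0_def]
      field_simp
    have hu0 : ∀ y ∈ Set.Ioi Y, c * Real.log R ≤ (y / (R * rc)) ^ η := by
      intro y hy
      have hy' : Y ≤ y := le_of_lt hy
      have h1 : Y / (R * rc) ≤ y / (R * rc) := by gcongr
      have h2 : (Y / (R * rc)) ^ η = c * Real.log R := by
        rw [hx0rc, ← Real.rpow_mul hclog, one_div_mul_cancel hη.ne', Real.rpow_one]
      rw [← h2]
      exact Real.rpow_le_rpow (by positivity) h1 hη.le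
    -- split the integral
    have hsplit2 : (∫ y in Set.Ioi (0:ℝ),
        (1 - Real.exp (-(R * ∫ z in Set.Ioi (y / R), β * Real.exp (-((z / rc) ^ η))))))
        = (∫ y in Set.Ioc (0:ℝ) Y,
            (1 - Real.exp (-(R * ∫ z in Set.Ioi (y / R), β * Real.exp (-((z / rc) ^ η))))))
          + ∫ y in Set.Ioi Y,
            (1 - Real.exp (-(R * ∫ z in Set.Ioi (y / R), β * Real.exp (-((z / rc) ^ η))))) := by
      rw [← setIntegral_union (Set.Ioc_disjoint_Ioi le_rfl) measurableSet_Ioi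
        (hf_int.mono_set Set.Ioc_subset_Ioi_self)
        (hf_int.mono_set (Set.Ioi_subset_Ioi hYpos.le)),
        Set.Ioc_union_Ioi_eq_Ioi hYpos.le]
    -- part 1
    have hpart1 : (∫ y in Set.Ioc (0:ℝ) Y,
        (1 - Real.exp (-(R * ∫ z in Set.Ioi (y / R), β * Real.exp (-((z / rc) ^ η)))))) ≤ Y := by
      calc (∫ y in Set.Ioc (0:ℝ) Y,
          (1 - Real.exp (-(R * ∫ z in Set.Ioi (y / R), β * Real.exp (-((z / rc) ^ η))))))
          ≤ ∫ _ in Set.Ioc (0:ℝ) Y, (1:ℝ) :=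
            setIntegral_mono_on (hf_int.mono_set Set.Ioc_subset_Ioi_self)
              (integrableOn_const measure_Ioc_lt_top.ne) measurableSet_Ioc
              (fun y _ => hf1 y)
        _ = Y := by
            rw [setIntegral_const, Real.volume_real_Ioc_of_le hYpos.le, smul_eq_mul, mul_one, sub_zero]
    -- part 2
    have hδint : IntegrableOn (fun y : ℝ => Real.exp (-(δ * (y / (R * rc)) ^ η)))
        (Set.Ioi 0) := aux_int_exp hη hRrc hδ
    have hscale : (∫ y in Set.Ioi (0:ℝ), Real.exp (-(δ * (y / (R * rc)) ^ η))) = R * M := by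
      have h := integral_comp_mul_left_Ioi
        (fun y : ℝ => Real.exp (-(δ * (y / rc) ^ η))) 0 (inv_pos.mpr hR0)
      simp only [mul_zero, smul_eq_mul, inv_inv] at h
      rw [hM_def, ← h]
      refine setIntegral_congr_fun measurableSet_Ioi (fun y _ => ?_)
      congr 3
      field_simp
    have hexpR : Real.exp (-((1 - 2 * δ) * (c * Real.log R))) = R ^ (-(1 + ε / 2)) := by
      rw [Real.rpow_def_of_pos hR0, ← mul_assoc, hkey]
      congr 1
      ring
    have hpart2 : (∫ y in Set.Ioi Y,
        (1 - Real.exp (-(R * ∫ z in Set.Ioi (y / R), β * Real.exp (-((z / rc) ^ η))))))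
        ≤ β * M ^ 2 * (R * R ^ (-(ε / 2))) := by
      have hstep1 : (∫ y in Set.Ioi Y,
          (1 - Real.exp (-(R * ∫ z in Set.Ioi (y / R), β * Real.exp (-((z / rc) ^ η))))))
          ≤ ∫ y in Set.Ioi Y, g y :=
        setIntegral_mono_on (hf_int.mono_set (Set.Ioi_subset_Ioi hYpos.le))
          (hg_int.mono_set (Set.Ioi_subset_Ioi hYpos.le)) measurableSet_Ioi
          (fun y hy => hfg y (Set.Ioi_subset_Ioi hYpos.le hy))
      have hstep2 : (∫ y in Set.Ioi Y, g y)
          = (R * (β * M)) * ∫ y in Set.Ioi Y, Real.exp (-((1 - δ) * (y / (R * rc)) ^ η)) :=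
        integral_const_mul _ _
      have hstep3 : (∫ y in Set.Ioi Y, Real.exp (-((1 - δ) * (y / (R * rc)) ^ η)))
          ≤ Real.exp (-((1 - 2 * δ) * (c * Real.log R))) *
              ∫ y in Set.Ioi Y, Real.exp (-(δ * (y / (R * rc)) ^ η)) := by
        rw [← integral_const_mul]
        apply setIntegral_mono_on
          ((aux_int_exp hη hRrc h1δ).mono_set (Set.Ioi_subset_Ioi hYpos.le))
          ((hδint.mono_set (Set.Ioi_subset_Ioi hYpos.le)).const_mul _) measurableSet_Ioi
        intro y hy
        rw [← Real.exp_add]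
        apply Real.exp_le_exp.mpr
        have h2δ : (0:ℝ) ≤ 1 - 2 * δ := by linarith
        have hprod := mul_le_mul_of_nonneg_left (hu0 y hy) h2δ
        nlinarith [hprod]
      have hstep4 : (∫ y in Set.Ioi Y, Real.exp (-(δ * (y / (R * rc)) ^ η)))
          ≤ ∫ y in Set.Ioi (0:ℝ), Real.exp (-(δ * (y / (R * rc)) ^ η)) :=
        setIntegral_mono_set hδint (ae_of_all _ fun y => Real.exp_nonneg _)
          (HasSubset.Subset.eventuallyLE (Set.Ioi_subset_Ioi hYpos.le))
      have hRsplit : R * R ^ (-(1 + ε / 2)) = R ^ (-(ε / 2)) := by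
        rw [show -(ε / 2) = 1 + -(1 + ε / 2) by ring, Real.rpow_add hR0, Real.rpow_one]
      calc (∫ y in Set.Ioi Y,
          (1 - Real.exp (-(R * ∫ z in Set.Ioi (y / R), β * Real.exp (-((z / rc) ^ η))))))
          ≤ (R * (β * M)) * ∫ y in Set.Ioi Y, Real.exp (-((1 - δ) * (y / (R * rc)) ^ η)) := by
            rw [← hstep2]; exact hstep1
        _ ≤ (R * (β * M)) * (Real.exp (-((1 - 2 * δ) * (c * Real.log R))) *
              ∫ y in Set.Ioi Y, Real.exp (-(δ * (y / (R * rc)) ^ η))) :=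
            mul_le_mul_of_nonneg_left hstep3 (by positivity)
        _ ≤ (R * (β * M)) * (Real.exp (-((1 - 2 * δ) * (c * Real.log R))) *
              ∫ y in Set.Ioi (0:ℝ), Real.exp (-(δ * (y / (R * rc)) ^ η))) := by
            apply mul_le_mul_of_nonneg_left _ (by positivity)
            exact mul_le_mul_of_nonneg_left hstep4 (Real.exp_nonneg _)
        _ = β * M ^ 2 * (R * R ^ (-(ε / 2))) := by
            rw [hscale, hexpR, ← hRsplit]
            ring
    -- assemble
    have hN : (∫ y in Set.Ioi (0:ℝ),
        (1 - Real.exp (-(R * ∫ z in Set.Ioi (y / R), β * Real.exp (-((z / rc) ^ η))))))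
        ≤ R * x0 + β * M ^ 2 * (R * R ^ (-(ε / 2))) := by
      rw [hsplit2]
      exact add_le_add hpart1 hpart2
    have hlogθ : (1:ℝ) ≤ (Real.log R) ^ θ := by
      calc (1:ℝ) = (Real.log R) ^ (0:ℝ) := (Real.rpow_zero _).symm
        _ ≤ (Real.log R) ^ θ := Real.rpow_le_rpow_of_exponent_le hlog hθ0
    have hlogθpos : 0 < (Real.log R) ^ θ := by linarith
    have hfrac : (Real.log R) ^ (1 / η) / (Real.log R) ^ θ ≤ 1 := by
      rw [← Real.rpow_sub hlogpos]
      exact Real.rpow_le_one_of_one_le_of_nonpos hlog (by linarith)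
    have hx0split : x0 = (rc * (1 + β * rc / η)) * (Real.log R) ^ (1 / η) := by
      rw [hx0_def, Real.mul_rpow (by linarith : (0:ℝ) ≤ c) hlogpos.le, hc_def,
        ← Real.rpow_mul (by positivity), mul_one_div_cancel hη.ne', Real.rpow_one]
      ring
    have hmain1 : x0 / (Real.log R) ^ θ ≤ rc + β * rc ^ 2 / η := by
      rw [hx0split, mul_div_assoc]
      have h1 : (rc * (1 + β * rc / η)) * ((Real.log R) ^ (1 / η) / (Real.log R) ^ θ)
          ≤ (rc * (1 + β * rc / η)) * 1 :=
        mul_le_mul_of_nonneg_left hfrac (by positivity)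
      calc (rc * (1 + β * rc / η)) * ((Real.log R) ^ (1 / η) / (Real.log R) ^ θ)
          ≤ (rc * (1 + β * rc / η)) * 1 := h1
        _ = rc + β * rc ^ 2 / η := by ring
    have hmain2 : β * M ^ 2 * R ^ (-(ε / 2)) / (Real.log R) ^ θ
        ≤ β * M ^ 2 * R ^ (-(ε / 2)) :=
      div_le_self (by positivity) hlogθ
    have hposden : (0:ℝ) < R * (Real.log R) ^ θ := mul_pos hR0 hlogθpos
    calc (1 / (R * (Real.log R) ^ θ)) *
        (∫ y in Set.Ioi (0:ℝ),
          (1 - Real.exp (-(R * ∫ z in Set.Ioi (y / R), β * Real.exp (-((z / rc) ^ η))))))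
        ≤ (1 / (R * (Real.log R) ^ θ)) * (R * x0 + β * M ^ 2 * (R * R ^ (-(ε / 2)))) :=
          mul_le_mul_of_nonneg_left hN (by positivity)
      _ = x0 / (Real.log R) ^ θ + β * M ^ 2 * R ^ (-(ε / 2)) / (Real.log R) ^ θ := by
          field_simp
      _ ≤ (rc + β * rc ^ 2 / η) + β * M ^ 2 * R ^ (-(ε / 2)) := add_le_add hmain1 hmain2
  -- conclude via limsup comparison
  have hF0 : ∀ᶠ R in atTop, (0:ℝ) ≤
      (1 / (R * (Real.log R) ^ θ)) *
        (∫ y in Set.Ioi (0:ℝ),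
          (1 - Real.exp (-(R * ∫ z in Set.Ioi (y / R), β * Real.exp (-((z / rc) ^ η)))))) := by
    filter_upwards [eventually_gt_atTop (1:ℝ)] with R hR1
    have hR0 : (0:ℝ) < R := by linarith
    have hlogpos : 0 < Real.log R := Real.log_pos hR1
    apply mul_nonneg
    · positivity
    · apply setIntegral_nonneg measurableSet_Ioi
      intro y _
      have h1 : Real.exp (-(R * ∫ z in Set.Ioi (y / R), β * Real.exp (-((z / rc) ^ η)))) ≤ 1 := by
        rw [Real.exp_le_one_iff]
        have := hInonneg (y / R)
        nlinarith
      linarith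
  have htend : Tendsto (fun R : ℝ => (rc + β * rc ^ 2 / η) + (β * M ^ 2) * R ^ (-(ε / 2)))
      atTop (nhds ((rc + β * rc ^ 2 / η) + (β * M ^ 2) * 0)) :=
    tendsto_const_nhds.add ((tendsto_rpow_neg_atTop (by positivity)).const_mul _)
  have hlim : Filter.limsup
      (fun R : ℝ => (rc + β * rc ^ 2 / η) + (β * M ^ 2) * R ^ (-(ε / 2))) atTop
      = rc + β * rc ^ 2 / η := by
    rw [htend.limsup_eq]
    ring
  have hcomp : Filter.limsup
      (fun R : ℝ =>
        (1 / (R * (Real.log R) ^ θ)) *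
          ∫ y in Set.Ioi (0:ℝ),
            (1 - Real.exp (-(R * ∫ z in Set.Ioi (y / R), β * Real.exp (-((z / rc) ^ η))))))
      Filter.atTop
      ≤ Filter.limsup
        (fun R : ℝ => (rc + β * rc ^ 2 / η) + (β * M ^ 2) * R ^ (-(ε / 2))) atTop := by
    exact Filter.limsup_le_limsup hev
      (IsBoundedUnder.isCoboundedUnder_le ⟨0, eventually_map.mpr hF0⟩)
      htend.isBoundedUnder_le
  exact hlim ▸ hcomp
end
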